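/- arXiv:1905.10477 — 4 statements merged into one kernel-verified Lean document; each statement's English description precedes it below -/
import Mathlib

section
/- There exists a universal constant C > 0 such that the following holds for every n ≥ 2, every real k* ≥ 0, and every β ∈ (0,1]. Define g(a) = C·((a + k*)·(1 + β·a) + 1/β) and S(G) = sup over real ℓ ≥ 0 of e^{−β·ℓ}·g(k_G + ℓ). Then: (i) for every n-node graph G, S(G) is an upper bound on the local sensitivity of f at G, i.e., S(G) ≥ max over G' node-adjacent to G of |f(G) − f(G')|; and (ii) for every pair of node-adjacent n-node graphs G, G', S(G') ≤ e^β·S(G). -/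
open MeasureTheory Finset
open scoped Classical

noncomputable section

/-- Two `n`-node graphs are node-adjacent if every edge in the symmetric
difference of their edge sets is incident to a single vertex `i`. -/
def NodeAdjacent {n : ℕ} (G G' : SimpleGraph (Fin n)) : Prop :=
  ∃ i : Fin n, ∀ u v : Fin n, ¬ (G.Adj u v ↔ G'.Adj u v) → u = i ∨ v = i

/-- `G` and `G'` are at node distance at most `c`: there is a path of length `c`
of consecutively node-adjacent graphs from `G` to `G'`. -/
def NodeDistLE {n : ℕ} (G G' : SimpleGraph (Fin n)) (c : ℕ) : Prop :=
  ∃ g : ℕ → SimpleGraph (Fin n), g 0 = G ∧ g c = G' ∧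
    ∀ j < c, NodeAdjacent (g j) (g (j + 1))

/-- `(ε,δ)`-node-differential privacy for a randomized algorithm, viewed as a map
assigning to each graph a (probability) measure on the output space `R`. -/
def NodeDP {n : ℕ} {R : Type*} [MeasurableSpace R]
    (A : SimpleGraph (Fin n) → Measure R) (ε δ : ℝ) : Prop :=
  ∀ G G' : SimpleGraph (Fin n), NodeAdjacent G G' → ∀ S : Set R, MeasurableSet S →
    ((A G) S).toReal ≤ Real.exp ε * ((A G') S).toReal + δ

/-- Number of edges of `G`. -/
def edgeCount {n : ℕ} (G : SimpleGraph (Fin n)) : ℕ := G.edgeSet.ncard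

/-- The empirical edge density `p_G = |E| / C(n,2)`. -/
def edgeDensity {n : ℕ} (G : SimpleGraph (Fin n)) : ℝ :=
  (edgeCount G : ℝ) / (n.choose 2 : ℝ)

/-- Degree of a vertex. -/
def deg {n : ℕ} (G : SimpleGraph (Fin n)) (v : Fin n) : ℕ := (G.neighborSet v).ncard

/-- Average degree `d̄_G = 2|E|/n  ( = (n-1)·p_G )`. -/
def avgDeg {n : ℕ} (G : SimpleGraph (Fin n)) : ℝ := 2 * (edgeCount G : ℝ) / n

/-- `G ∈ 𝒢_{n,k}` : every degree lies in `[d̄ - k, d̄ + k]`. -/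
def Concentrated {n : ℕ} (G : SimpleGraph (Fin n)) (k : ℝ) : Prop :=
  ∀ v : Fin n, |(deg G v : ℝ) - avgDeg G| ≤ k

/-- The number of vertices whose degree lies outside `[d̄_G - k* - 3m, d̄_G + k* + 3m]`. -/
def farCount {n : ℕ} (G : SimpleGraph (Fin n)) (kstar : ℝ) (m : ℕ) : ℕ :=
  {v : Fin n | kstar + 3 * (m : ℝ) < |(deg G v : ℝ) - avgDeg G|}.ncard

/-- `k_G` : the smallest positive integer `m` such that at most `m` vertices have
degree outside `[d̄_G - k* - 3m, d̄_G + k* + 3m]`. -/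
def kOf {n : ℕ} (G : SimpleGraph (Fin n)) (kstar : ℝ) : ℕ :=
  sInf {m : ℕ | 0 < m ∧ farCount G kstar m ≤ m}

/-- `t_v` : the distance from `deg_G(v)` to the interval `I_G`. -/
def tDist {n : ℕ} (G : SimpleGraph (Fin n)) (kstar : ℝ) (v : Fin n) : ℝ :=
  max 0 (|(deg G v : ℝ) - avgDeg G| - (kstar + 3 * (kOf G kstar : ℝ)))

/-- The weight `wt_G(v) = max(0, 1 - β t_v)`. -/
def wt {n : ℕ} (G : SimpleGraph (Fin n)) (kstar β : ℝ) (v : Fin n) : ℝ :=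
  max 0 (1 - β * tDist G kstar v)

/-- The value of the pair `{u,v}`:
`val_G({u,v}) = wt_G({u,v})·x_{uv} + (1 - wt_G({u,v}))·p_G`,
where `wt_G({u,v}) = min(wt_G(u), wt_G(v))`. -/
def valPair {n : ℕ} (G : SimpleGraph (Fin n)) (kstar β : ℝ) (u v : Fin n) : ℝ :=
  min (wt G kstar β u) (wt G kstar β v) * (if G.Adj u v then 1 else 0)
    + (1 - min (wt G kstar β u) (wt G kstar β v)) * edgeDensity G

/-- `f(G)` : the sum of `val_G({u,v})` over unordered pairs of distinct vertices. -/
def fEst {n : ℕ} (G : SimpleGraph (Fin n)) (kstar β : ℝ) : ℝ :=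
  (∑ u : Fin n, ∑ v : Fin n, if u ≠ v then valPair G kstar β u v else 0) / 2

/-- `f_u(G) = Σ_{v ≠ u} val_G({u,v})`. -/
def fVert {n : ℕ} (G : SimpleGraph (Fin n)) (kstar β : ℝ) (u : Fin n) : ℝ :=
  ∑ v ∈ Finset.univ.erase u, valPair G kstar β u v

/-- The smooth upper bound
`S(G) = sup_{ℓ ≥ 0} e^{-βℓ} · C·((k_G+ℓ+k*)(1+β(k_G+ℓ)) + 1/β)`. -/
def smoothS {n : ℕ} (G : SimpleGraph (Fin n)) (kstar β C : ℝ) : ℝ :=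
  ⨆ ℓ : {x : ℝ // 0 ≤ x},
    Real.exp (-β * (ℓ : ℝ)) *
      (C * (((kOf G kstar : ℝ) + (ℓ : ℝ) + kstar) * (1 + β * ((kOf G kstar : ℝ) + (ℓ : ℝ))) + 1 / β))

/-- The Student's t-distribution with 3 degrees of freedom, as a measure on `ℝ`. -/
def studentT3 : Measure ℝ :=
  MeasureTheory.volume.withDensity
    (fun z => ENNReal.ofReal (2 / (Real.sqrt 3 * Real.pi * (1 + z ^ 2 / 3) ^ 2)))

/-- The disjoint union of cliques on `Fin n` given by a block-assignment `π`. -/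
def cliqueUnion {n i : ℕ} (π : Fin n → Fin i) : SimpleGraph (Fin n) where
  Adj u v := u ≠ v ∧ π u = π v
  symm := ⟨fun u v h => ⟨Ne.symm h.1, h.2.symm⟩⟩
  loopless := ⟨fun u h => h.1 rfl⟩

section Aux
variable {n : ℕ}

lemma edgeCount_eq_card (G : SimpleGraph (Fin n)) : edgeCount G = G.edgeFinset.card := by
  rw [edgeCount, Set.ncard_eq_toFinset_card']
  exact congrArg Finset.card (by ext; simp)

lemma deg_eq_degree (G : SimpleGraph (Fin n)) (v : Fin n) : deg G v = G.degree v := by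
  rw [deg, Set.ncard_eq_toFinset_card']; rfl

lemma deg_eq_sum (G : SimpleGraph (Fin n)) (v : Fin n) :
    (deg G v : ℝ) = ∑ u ∈ Finset.univ.erase v, (if G.Adj v u then (1:ℝ) else 0) := by
  rw [Finset.sum_erase _ (by simp)]
  rw [deg_eq_degree, SimpleGraph.degree, SimpleGraph.neighborFinset_eq_filter,
    Finset.card_filter]
  push_cast
  rfl

lemma sum_sum_x (G : SimpleGraph (Fin n)) :
    ∑ v, ∑ u ∈ Finset.univ.erase v, (if G.Adj v u then (1:ℝ) else 0)
      = 2 * (edgeCount G : ℝ) := by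
  have h := SimpleGraph.sum_degrees_eq_twice_card_edges G
  have h2 : ∑ v, (deg G v : ℝ) = 2 * (edgeCount G : ℝ) := by
    rw [edgeCount_eq_card]
    norm_cast
    simp_rw [deg_eq_degree]
    omega
  rw [← h2]
  exact Finset.sum_congr rfl fun v _ => (deg_eq_sum G v).symm

end Aux
section Aux2
variable {n : ℕ}

lemma choose_two_cast (hn : 2 ≤ n) : (n.choose 2 : ℝ) = n * ((n:ℝ) - 1) / 2 := by
  rw [Nat.choose_two_right]
  have hd : 2 ∣ n * (n - 1) := by
    rcases Nat.even_or_odd n with h | h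
    · exact Dvd.dvd.mul_right h.two_dvd _
    · exact Dvd.dvd.mul_left (Nat.Odd.sub_odd h odd_one).two_dvd _
  rw [Nat.cast_div hd (by norm_num)]
  rw [Nat.cast_mul, Nat.cast_sub (by omega)]
  norm_num

lemma choose_two_pos (hn : 2 ≤ n) : 0 < (n.choose 2 : ℝ) := by
  rw [choose_two_cast hn]
  have : (2:ℝ) ≤ n := by exact_mod_cast hn
  nlinarith

lemma edgeDensity_nonneg (G : SimpleGraph (Fin n)) : 0 ≤ edgeDensity G := by
  unfold edgeDensity; positivity

lemma edgeDensity_le_one (hn : 2 ≤ n) (G : SimpleGraph (Fin n)) : edgeDensity G ≤ 1 := by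
  rw [edgeDensity, div_le_one (choose_two_pos hn)]
  have := G.card_edgeFinset_le_card_choose_two
  rw [← edgeCount_eq_card] at this
  simp only [Fintype.card_fin] at this
  exact_mod_cast this

lemma avg_eq_density (hn : 2 ≤ n) (G : SimpleGraph (Fin n)) :
    avgDeg G = ((n:ℝ) - 1) * edgeDensity G := by
  have h2 : (2:ℝ) ≤ n := by exact_mod_cast hn
  have h0 : (n:ℝ) ≠ 0 := by linarith
  have h1 : ((n:ℝ) - 1) ≠ 0 := by linarith
  rw [avgDeg, edgeDensity, choose_two_cast hn]
  field_simp

lemma tDist_nonneg (G : SimpleGraph (Fin n)) (kstar : ℝ) (v : Fin n) :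
    0 ≤ tDist G kstar v := le_max_left _ _

lemma wt_nonneg (G : SimpleGraph (Fin n)) (kstar β : ℝ) (v : Fin n) :
    0 ≤ wt G kstar β v := le_max_left _ _

lemma wt_le_one (G : SimpleGraph (Fin n)) (kstar β : ℝ) (hβ : 0 < β) (v : Fin n) :
    wt G kstar β v ≤ 1 := by
  rw [wt]
  have := tDist_nonneg G kstar v
  have : β * tDist G kstar v ≥ 0 := by positivity
  simp only [max_le_iff]
  constructor <;> linarith

lemma wt_eq_one (G : SimpleGraph (Fin n)) (kstar β : ℝ) (v : Fin n)
    (h : tDist G kstar v = 0) : wt G kstar β v = 1 := by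
  rw [wt, h, mul_zero, sub_zero]
  exact max_eq_right zero_le_one

lemma farCount_eq_filter (G : SimpleGraph (Fin n)) (kstar : ℝ) (m : ℕ) :
    farCount G kstar m
      = (Finset.univ.filter
          (fun v => kstar + 3 * (m:ℝ) < |(deg G v : ℝ) - avgDeg G|)).card := by
  rw [farCount, Set.ncard_eq_toFinset_card']
  congr 1
  ext v
  simp

lemma kOf_spec (hn : 0 < n) (G : SimpleGraph (Fin n)) (kstar : ℝ) :
    0 < kOf G kstar ∧ farCount G kstar (kOf G kstar) ≤ kOf G kstar := by
  have hne : (n : ℕ) ∈ {m : ℕ | 0 < m ∧ farCount G kstar m ≤ m} := by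
    refine ⟨hn, ?_⟩
    rw [farCount_eq_filter]
    calc _ ≤ (Finset.univ : Finset (Fin n)).card := Finset.card_filter_le _ _
      _ = n := by simp
  exact Nat.sInf_mem ⟨n, hne⟩

lemma tDist_pos_iff (G : SimpleGraph (Fin n)) (kstar : ℝ) (v : Fin n) :
    0 < tDist G kstar v ↔
      kstar + 3 * (kOf G kstar : ℝ) < |(deg G v : ℝ) - avgDeg G| := by
  rw [tDist]
  constructor
  · intro h
    by_contra hc
    push_neg at hc
    have : |(deg G v : ℝ) - avgDeg G| - (kstar + 3 * (kOf G kstar : ℝ)) ≤ 0 := by linarith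
    simp [max_eq_left this] at h
  · intro h
    have : 0 < |(deg G v : ℝ) - avgDeg G| - (kstar + 3 * (kOf G kstar : ℝ)) := by linarith
    exact lt_of_lt_of_le this (le_max_right _ _)

lemma sum_one_sub_wt_le (hn : 0 < n) (G : SimpleGraph (Fin n)) (kstar β : ℝ)
    (hβ : 0 < β) :
    ∑ v : Fin n, (1 - wt G kstar β v) ≤ (kOf G kstar : ℝ) := by
  classical
  have hk := (kOf_spec hn G kstar).2
  calc ∑ v : Fin n, (1 - wt G kstar β v)
      ≤ ∑ v ∈ Finset.univ.filter (fun v => 0 < tDist G kstar v), (1:ℝ) := by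
        rw [← Finset.sum_filter_add_sum_filter_not Finset.univ
          (fun v => 0 < tDist G kstar v) (fun v => 1 - wt G kstar β v)]
        have h1 : ∑ v ∈ Finset.univ.filter (fun v => ¬ 0 < tDist G kstar v),
            (1 - wt G kstar β v) = 0 := by
          apply Finset.sum_eq_zero
          intro v hv
          simp only [Finset.mem_filter] at hv
          have ht : tDist G kstar v = 0 :=
            le_antisymm (not_lt.mp hv.2) (tDist_nonneg G kstar v)
          rw [wt_eq_one G kstar β v ht]; ring
        rw [h1, add_zero]
        apply Finset.sum_le_sum
        intro v _
        have := wt_nonneg G kstar β v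
        linarith
    _ = ((Finset.univ.filter (fun v => 0 < tDist G kstar v)).card : ℝ) := by simp
    _ ≤ (kOf G kstar : ℝ) := by
        have : (Finset.univ.filter (fun v => 0 < tDist G kstar v)).card
            = farCount G kstar (kOf G kstar) := by
          rw [farCount_eq_filter]
          congr 1
          ext v
          simp [tDist_pos_iff]
        rw [this]
        exact_mod_cast hk

end Aux2
section Aux3
variable {n : ℕ} {G G' : SimpleGraph (Fin n)} {i : Fin n}

def xe {n : ℕ} (G : SimpleGraph (Fin n)) (u v : Fin n) : ℝ := if G.Adj u v then 1 else 0

lemma xe_mem (G : SimpleGraph (Fin n)) (u v : Fin n) : xe G u v = 0 ∨ xe G u v = 1 := by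
  rw [xe]; split <;> simp

lemma xe_abs_le (G : SimpleGraph (Fin n)) (u v : Fin n) : |xe G u v| ≤ 1 := by
  rcases xe_mem G u v with h | h <;> rw [h] <;> norm_num

lemma deg_eq_sum' (G : SimpleGraph (Fin n)) (v : Fin n) :
    (deg G v : ℝ) = ∑ u ∈ Finset.univ.erase v, xe G v u := deg_eq_sum G v

variable (hi : ∀ u v : Fin n, ¬ (G.Adj u v ↔ G'.Adj u v) → u = i ∨ v = i)
include hi

lemma adj_iff_of_ne {u v : Fin n} (hu : u ≠ i) (hv : v ≠ i) :
    G.Adj u v ↔ G'.Adj u v := by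
  by_contra h
  rcases hi u v h with h' | h' <;> [exact hu h'; exact hv h']

lemma xe_eq_of_ne {u v : Fin n} (hu : u ≠ i) (hv : v ≠ i) : xe G u v = xe G' u v := by
  rw [xe, xe, if_congr (adj_iff_of_ne hi hu hv) rfl rfl]

lemma inner_xe_diff_le {v : Fin n} (hv : v ≠ i) :
    ∑ u ∈ Finset.univ.erase v, |xe G v u - xe G' v u| ≤ 1 := by
  calc ∑ u ∈ Finset.univ.erase v, |xe G v u - xe G' v u|
      ≤ ∑ u ∈ Finset.univ.erase v, (if u = i then (1:ℝ) else 0) := by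
        apply Finset.sum_le_sum
        intro u _
        by_cases hu : u = i
        · subst hu
          rw [if_pos rfl]
          rcases xe_mem G v u with h | h <;> rcases xe_mem G' v u with h' | h' <;>
            rw [h, h'] <;> norm_num
        · rw [if_neg hu, xe_eq_of_ne hi hv hu]
          simp
    _ = 1 := by
        rw [Finset.sum_ite_eq' (Finset.univ.erase v) i (fun _ => (1:ℝ))]
        rw [if_pos (Finset.mem_erase.mpr ⟨Ne.symm hv, Finset.mem_univ i⟩)]

lemma deg_diff_le {v : Fin n} (hv : v ≠ i) :
    |(deg G v : ℝ) - (deg G' v : ℝ)| ≤ 1 := by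
  rw [deg_eq_sum', deg_eq_sum', ← Finset.sum_sub_distrib]
  calc |∑ u ∈ Finset.univ.erase v, (xe G v u - xe G' v u)|
      ≤ ∑ u ∈ Finset.univ.erase v, |xe G v u - xe G' v u| := Finset.abs_sum_le_sum_abs _ _
    _ ≤ 1 := inner_xe_diff_le hi hv

lemma edgeCount_diff_le (hn : 1 ≤ n) :
    |(edgeCount G : ℝ) - (edgeCount G' : ℝ)| ≤ (n:ℝ) - 1 := by
  have hcard : ((Finset.univ.erase i).card : ℝ) = (n:ℝ) - 1 := by
    rw [Finset.card_erase_of_mem (Finset.mem_univ i)]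
    simp only [Finset.card_univ, Fintype.card_fin]
    rw [Nat.cast_sub hn]; norm_num
  have key : |2*(edgeCount G:ℝ) - 2*(edgeCount G':ℝ)| ≤ 2 * ((n:ℝ) - 1) := by
    have h2 : 2*(edgeCount G:ℝ) - 2*(edgeCount G':ℝ)
        = ∑ v, ∑ u ∈ Finset.univ.erase v, (xe G v u - xe G' v u) := by
      simp_rw [xe, Finset.sum_sub_distrib]
      rw [sum_sum_x, sum_sum_x]
    rw [h2]
    calc |∑ v, ∑ u ∈ Finset.univ.erase v, (xe G v u - xe G' v u)|
        ≤ ∑ v, |∑ u ∈ Finset.univ.erase v, (xe G v u - xe G' v u)| :=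
          Finset.abs_sum_le_sum_abs _ _
      _ ≤ ∑ v : Fin n, ((if v = i then ((n:ℝ)-1) - 1 else 0) + 1) := by
          apply Finset.sum_le_sum
          intro v _
          by_cases hv : v = i
          · subst hv
            rw [if_pos rfl]
            calc |∑ u ∈ Finset.univ.erase v, (xe G v u - xe G' v u)|
                ≤ ∑ u ∈ Finset.univ.erase v, |xe G v u - xe G' v u| :=
                  Finset.abs_sum_le_sum_abs _ _
              _ ≤ ∑ u ∈ Finset.univ.erase v, (1:ℝ) := by
                  apply Finset.sum_le_sum
                  intro u _
                  rcases xe_mem G v u with h | h <;> rcases xe_mem G' v u with h' | h' <;>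
                    rw [h, h'] <;> norm_num
              _ = ((Finset.univ.erase v).card : ℝ) := by simp
              _ = (n:ℝ) - 1 := hcard
              _ = _ := by ring
          · rw [if_neg hv]
            calc |∑ u ∈ Finset.univ.erase v, (xe G v u - xe G' v u)|
                ≤ ∑ u ∈ Finset.univ.erase v, |xe G v u - xe G' v u| :=
                  Finset.abs_sum_le_sum_abs _ _
              _ ≤ 1 := inner_xe_diff_le hi hv
              _ = 0 + 1 := by ring
      _ = (((n:ℝ)-1) - 1) + (n:ℝ) := by
          rw [Finset.sum_add_distrib, Finset.sum_ite_eq' Finset.univ i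
            (fun _ => ((n:ℝ)-1) - 1), if_pos (Finset.mem_univ i)]
          simp
      _ = 2 * ((n:ℝ) - 1) := by ring
  have habs : |2*(edgeCount G:ℝ) - 2*(edgeCount G':ℝ)|
      = 2 * |(edgeCount G:ℝ) - (edgeCount G':ℝ)| := by
    rw [show (2:ℝ)*(edgeCount G:ℝ) - 2*(edgeCount G':ℝ)
      = 2*((edgeCount G:ℝ)-(edgeCount G':ℝ)) by ring, abs_mul, abs_two]
  rw [habs] at key
  linarith

lemma edgeDensity_diff_le (hn : 2 ≤ n) :
    |edgeDensity G - edgeDensity G'| ≤ 2 / (n:ℝ) := by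
  have h2 : (2:ℝ) ≤ n := by exact_mod_cast hn
  have hc := choose_two_pos (n := n) hn
  rw [edgeDensity, edgeDensity, div_sub_div_same, abs_div, abs_of_pos hc,
    div_le_div_iff₀ hc (by linarith)]
  have := edgeCount_diff_le (G := G) (G' := G') (i := i) hi (by omega)
  calc |(edgeCount G:ℝ) - (edgeCount G':ℝ)| * (n:ℝ) ≤ ((n:ℝ)-1) * n := by
        apply mul_le_mul_of_nonneg_right this (by linarith)
    _ = 2 * (n.choose 2 : ℝ) := by rw [choose_two_cast hn]; ring

lemma avgDeg_diff_le (hn : 2 ≤ n) : |avgDeg G - avgDeg G'| ≤ 2 := by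
  have h2 : (2:ℝ) ≤ n := by exact_mod_cast hn
  rw [avgDeg, avgDeg, div_sub_div_same, abs_div, abs_of_pos (by linarith : (0:ℝ) < n),
    div_le_iff₀ (by linarith : (0:ℝ) < n)]
  have := edgeCount_diff_le (G := G) (G' := G') (i := i) hi (by omega)
  have habs : |2*(edgeCount G:ℝ) - 2*(edgeCount G':ℝ)|
      = 2 * |(edgeCount G:ℝ) - (edgeCount G':ℝ)| := by
    rw [show (2:ℝ)*(edgeCount G:ℝ) - 2*(edgeCount G':ℝ)
      = 2*((edgeCount G:ℝ)-(edgeCount G':ℝ)) by ring, abs_mul, abs_two]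
  rw [habs]
  nlinarith [abs_nonneg ((edgeCount G:ℝ) - (edgeCount G':ℝ))]

lemma kOf_le_succ (hn : 2 ≤ n) (kstar : ℝ) (hks : 0 ≤ kstar) :
    kOf G' kstar ≤ kOf G kstar + 1 := by
  set k := kOf G kstar with hk
  have hfc : farCount G' kstar (k+1) ≤ k + 1 := by
    rw [farCount_eq_filter]
    have hsub : Finset.univ.filter
        (fun v => kstar + 3 * ((k+1:ℕ):ℝ) < |(deg G' v : ℝ) - avgDeg G'|)
        ⊆ (Finset.univ.filter
            (fun v => kstar + 3 * (k:ℝ) < |(deg G v : ℝ) - avgDeg G|)) ∪ {i} := by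
      intro v hv
      simp only [Finset.mem_filter, Finset.mem_union, Finset.mem_singleton,
        Finset.mem_univ, true_and] at hv ⊢
      by_cases hvi : v = i
      · right; exact hvi
      · left
        have hd := deg_diff_le hi hvi
        have ha := avgDeg_diff_le (G := G) (G' := G') (i := i) hi hn
        have htri : |(deg G' v : ℝ) - avgDeg G'| ≤ |(deg G v : ℝ) - avgDeg G| + 3 := by
          have := abs_sub_abs_le_abs_sub ((deg G' v : ℝ) - avgDeg G')
            ((deg G v : ℝ) - avgDeg G)
          have h4 : |((deg G' v : ℝ) - avgDeg G') - ((deg G v : ℝ) - avgDeg G)|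
              ≤ 3 := by
            calc |((deg G' v : ℝ) - avgDeg G') - ((deg G v : ℝ) - avgDeg G)|
                = |((deg G' v:ℝ) - (deg G v:ℝ)) + (avgDeg G - avgDeg G')| := by ring_nf
              _ ≤ |(deg G' v:ℝ) - (deg G v:ℝ)| + |avgDeg G - avgDeg G'| := abs_add_le _ _
              _ ≤ 1 + 2 := by
                  rw [abs_sub_comm]
                  exact add_le_add hd ha
              _ = 3 := by norm_num
          linarith
        push_cast at hv
        linarith
    calc _ ≤ ((Finset.univ.filter
          (fun v => kstar + 3 * (k:ℝ) < |(deg G v : ℝ) - avgDeg G|)) ∪ {i}).card :=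
          Finset.card_le_card hsub
      _ ≤ (Finset.univ.filter
          (fun v => kstar + 3 * (k:ℝ) < |(deg G v : ℝ) - avgDeg G|)).card + 1 := by
          have := Finset.card_union_le (Finset.univ.filter
            (fun v => kstar + 3 * (k:ℝ) < |(deg G v : ℝ) - avgDeg G|)) ({i} : Finset (Fin n))
          simpa using this
      _ ≤ k + 1 := by
          have h1 : (Finset.univ.filter
              (fun v => kstar + 3 * (k:ℝ) < |(deg G v : ℝ) - avgDeg G|)).card
              = farCount G kstar k := (farCount_eq_filter G kstar k).symm
          rw [h1]
          exact Nat.add_le_add_right (kOf_spec (by omega) G kstar).2 1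
  exact Nat.sInf_le ⟨by omega, hfc⟩

end Aux3
section Aux4
variable {n : ℕ} {G G' : SimpleGraph (Fin n)} {i : Fin n}

lemma abs_tDist_le (G : SimpleGraph (Fin n)) (kstar : ℝ) (v : Fin n) :
    |(deg G v : ℝ) - avgDeg G| ≤ tDist G kstar v + kstar + 3 * (kOf G kstar : ℝ) := by
  have := le_max_right (0:ℝ) (|(deg G v : ℝ) - avgDeg G| - (kstar + 3 * (kOf G kstar : ℝ)))
  rw [tDist]
  linarith

lemma wt_mul_tDist_le (G : SimpleGraph (Fin n)) (kstar β : ℝ) (hβ : 0 < β) (v : Fin n) :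
    wt G kstar β v * tDist G kstar v ≤ 1 / β := by
  set t := tDist G kstar v with ht
  have ht0 : 0 ≤ t := tDist_nonneg G kstar v
  by_cases h : t ≤ 1 / β
  · calc wt G kstar β v * t ≤ 1 * t :=
        mul_le_mul_of_nonneg_right (wt_le_one G kstar β hβ v) ht0
      _ = t := one_mul t
      _ ≤ 1 / β := h
  · push_neg at h
    have hw : wt G kstar β v = 0 := by
      rw [wt, max_eq_left]
      rw [← ht]
      rw [div_lt_iff₀ hβ] at h
      nlinarith
    rw [hw, zero_mul]
    positivity

variable (hi : ∀ u v : Fin n, ¬ (G.Adj u v ↔ G'.Adj u v) → u = i ∨ v = i)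
include hi

lemma hi_symm : ∀ u v : Fin n, ¬ (G'.Adj u v ↔ G.Adj u v) → u = i ∨ v = i :=
  fun u v h => hi u v (fun hh => h hh.symm)

lemma kOf_diff_le (hn : 2 ≤ n) (kstar : ℝ) (hks : 0 ≤ kstar) :
    |(kOf G kstar : ℝ) - (kOf G' kstar : ℝ)| ≤ 1 := by
  have h1 := kOf_le_succ hi hn kstar hks
  have h2 := kOf_le_succ (hi_symm hi) hn kstar hks
  have c1 : (kOf G' kstar : ℝ) ≤ (kOf G kstar : ℝ) + 1 := by exact_mod_cast h1
  have c2 : (kOf G kstar : ℝ) ≤ (kOf G' kstar : ℝ) + 1 := by exact_mod_cast h2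
  rw [abs_le]
  constructor <;> linarith

lemma tDist_diff_le (hn : 2 ≤ n) (kstar : ℝ) (hks : 0 ≤ kstar) {v : Fin n} (hv : v ≠ i) :
    |tDist G kstar v - tDist G' kstar v| ≤ 6 := by
  rw [tDist, tDist, max_comm (0:ℝ) _, max_comm (0:ℝ) _]
  refine le_trans (abs_max_sub_max_le_abs _ _ 0) ?_
  have hd := deg_diff_le hi hv
  have ha := avgDeg_diff_le (G := G) (G' := G') (i := i) hi hn
  have hk := kOf_diff_le hi hn kstar hks
  have htri : |(|(deg G v : ℝ) - avgDeg G|) - (|(deg G' v : ℝ) - avgDeg G'|)| ≤ 3 := by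
    refine le_trans (abs_abs_sub_abs_le_abs_sub _ _) ?_
    calc |((deg G v : ℝ) - avgDeg G) - ((deg G' v : ℝ) - avgDeg G')|
        = |((deg G v:ℝ) - (deg G' v:ℝ)) - (avgDeg G - avgDeg G')| := by ring_nf
      _ ≤ |(deg G v:ℝ) - (deg G' v:ℝ)| + |avgDeg G - avgDeg G'| := abs_sub _ _
      _ ≤ 1 + 2 := add_le_add hd ha
      _ = 3 := by norm_num
  calc |(|(deg G v : ℝ) - avgDeg G| - (kstar + 3 * (kOf G kstar : ℝ)))
        - (|(deg G' v : ℝ) - avgDeg G'| - (kstar + 3 * (kOf G' kstar : ℝ)))|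
      = |((|(deg G v : ℝ) - avgDeg G|) - (|(deg G' v : ℝ) - avgDeg G'|))
        - 3 * ((kOf G kstar : ℝ) - (kOf G' kstar : ℝ))| := by ring_nf
    _ ≤ |(|(deg G v : ℝ) - avgDeg G|) - (|(deg G' v : ℝ) - avgDeg G'|)|
        + |3 * ((kOf G kstar : ℝ) - (kOf G' kstar : ℝ))| := abs_sub _ _
    _ ≤ 3 + 3 * 1 := by
        refine add_le_add htri ?_
        rw [abs_mul]
        norm_num
        linarith [hk]
    _ = 6 := by norm_num

lemma wt_diff_le (hn : 2 ≤ n) (kstar β : ℝ) (hks : 0 ≤ kstar) (hβ : 0 < β)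
    {v : Fin n} (hv : v ≠ i) :
    |wt G kstar β v - wt G' kstar β v| ≤ 6 * β := by
  rw [wt, wt, max_comm (0:ℝ) _, max_comm (0:ℝ) _]
  refine le_trans (abs_max_sub_max_le_abs _ _ 0) ?_
  calc |(1 - β * tDist G kstar v) - (1 - β * tDist G' kstar v)|
      = β * |tDist G kstar v - tDist G' kstar v| := by
        rw [show (1 - β * tDist G kstar v) - (1 - β * tDist G' kstar v)
          = β * (tDist G' kstar v - tDist G kstar v) by ring, abs_mul,
          abs_of_pos hβ, abs_sub_comm]
    _ ≤ β * 6 := mul_le_mul_of_nonneg_left (tDist_diff_le hi hn kstar hks hv) hβ.le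
    _ = 6 * β := by ring

end Aux4
section Aux5
variable {n : ℕ}

lemma card_erase_univ (hn : 2 ≤ n) (u : Fin n) :
    ((Finset.univ.erase u).card : ℝ) = (n:ℝ) - 1 := by
  rw [Finset.card_erase_of_mem (Finset.mem_univ u)]
  simp only [Finset.card_univ, Fintype.card_fin]
  rw [Nat.cast_sub (by omega)]; norm_num

lemma sum_xp (hn : 2 ≤ n) (H : SimpleGraph (Fin n)) (u : Fin n) :
    ∑ v ∈ Finset.univ.erase u, (xe H u v - edgeDensity H)
      = (deg H u : ℝ) - avgDeg H := by
  rw [Finset.sum_sub_distrib, ← deg_eq_sum', Finset.sum_const, nsmul_eq_mul,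
    avg_eq_density hn]
  rw [card_erase_univ hn u]

lemma xp_abs_le (hn : 2 ≤ n) (H : SimpleGraph (Fin n)) (u v : Fin n) :
    |xe H u v - edgeDensity H| ≤ 1 := by
  have h0 := edgeDensity_nonneg H
  have h1 := edgeDensity_le_one hn H
  rcases xe_mem H u v with h | h <;> rw [h, abs_le] <;> constructor <;> linarith

lemma min_eq_sub_max (a b : ℝ) : min a b = a - max (a - b) 0 := by
  rcases le_total a b with h | h
  · rw [min_eq_left h, max_eq_right (by linarith), sub_zero]
  · rw [min_eq_right h, max_eq_left (by linarith)]; ring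

lemma lemmaA (hn : 2 ≤ n) (H : SimpleGraph (Fin n)) (kstar β : ℝ)
    (hks : 0 ≤ kstar) (hβ : 0 < β) (u : Fin n) :
    |∑ v ∈ Finset.univ.erase u,
        min (wt H kstar β u) (wt H kstar β v) * (xe H u v - edgeDensity H)|
      ≤ kstar + 4 * (kOf H kstar : ℝ) + 1 / β := by
  have hk0 : (0:ℝ) ≤ (kOf H kstar : ℝ) := Nat.cast_nonneg _
  have hwu0 := wt_nonneg H kstar β u
  have hwu1 := wt_le_one H kstar β hβ u
  have split : ∀ v ∈ Finset.univ.erase u,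
      min (wt H kstar β u) (wt H kstar β v) * (xe H u v - edgeDensity H)
      = wt H kstar β u * (xe H u v - edgeDensity H)
        - max (wt H kstar β u - wt H kstar β v) 0 * (xe H u v - edgeDensity H) := by
    intro v _
    rw [min_eq_sub_max]; ring
  rw [Finset.sum_congr rfl split, Finset.sum_sub_distrib, ← Finset.mul_sum, sum_xp hn]
  refine le_trans (abs_sub _ _) ?_
  have h1 : |wt H kstar β u * ((deg H u:ℝ) - avgDeg H)|
      ≤ 1/β + kstar + 3 * (kOf H kstar : ℝ) := by
    rw [abs_mul, abs_of_nonneg hwu0]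
    calc wt H kstar β u * |(deg H u:ℝ) - avgDeg H|
        ≤ wt H kstar β u * (tDist H kstar u + kstar + 3 * (kOf H kstar : ℝ)) :=
          mul_le_mul_of_nonneg_left (abs_tDist_le H kstar u) hwu0
      _ = wt H kstar β u * tDist H kstar u
          + wt H kstar β u * (kstar + 3 * (kOf H kstar : ℝ)) := by ring
      _ ≤ 1/β + 1 * (kstar + 3 * (kOf H kstar : ℝ)) := by
          refine add_le_add (wt_mul_tDist_le H kstar β hβ u) ?_
          exact mul_le_mul_of_nonneg_right hwu1 (by linarith)
      _ = 1/β + kstar + 3 * (kOf H kstar : ℝ) := by ring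
  have h2 : |∑ v ∈ Finset.univ.erase u,
      max (wt H kstar β u - wt H kstar β v) 0 * (xe H u v - edgeDensity H)|
      ≤ (kOf H kstar : ℝ) := by
    refine le_trans (Finset.abs_sum_le_sum_abs _ _) ?_
    calc ∑ v ∈ Finset.univ.erase u,
        |max (wt H kstar β u - wt H kstar β v) 0 * (xe H u v - edgeDensity H)|
        ≤ ∑ v ∈ Finset.univ.erase u, (1 - wt H kstar β v) := by
          apply Finset.sum_le_sum
          intro v _
          have hwv1 := wt_le_one H kstar β hβ v
          rw [abs_mul, abs_of_nonneg (le_max_right _ _)]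
          calc max (wt H kstar β u - wt H kstar β v) 0 * |xe H u v - edgeDensity H|
              ≤ (1 - wt H kstar β v) * 1 := by
                refine mul_le_mul ?_ (xp_abs_le hn H u v) (abs_nonneg _) (by linarith)
                exact max_le (by linarith) (by linarith)
            _ = 1 - wt H kstar β v := mul_one _
      _ ≤ ∑ v : Fin n, (1 - wt H kstar β v) := by
          refine Finset.sum_le_sum_of_subset_of_nonneg (Finset.subset_univ _) ?_
          intro v _ _
          linarith [wt_le_one H kstar β hβ v]
      _ ≤ (kOf H kstar : ℝ) := sum_one_sub_wt_le (by omega) H kstar β hβ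
  linarith
end Aux5
section Aux6
variable {n : ℕ}

lemma valPair_eq (H : SimpleGraph (Fin n)) (kstar β : ℝ) (u v : Fin n) :
    valPair H kstar β u v = edgeDensity H
      + min (wt H kstar β u) (wt H kstar β v) * (xe H u v - edgeDensity H) := by
  rw [valPair, xe]; ring

lemma xe_symm (H : SimpleGraph (Fin n)) (u v : Fin n) : xe H u v = xe H v u := by
  rw [xe, xe, if_congr (H.adj_comm u v) rfl rfl]

lemma valPair_symm (H : SimpleGraph (Fin n)) (kstar β : ℝ) (u v : Fin n) :
    valPair H kstar β u v = valPair H kstar β v u := by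
  rw [valPair_eq, valPair_eq, min_comm, xe_symm]

lemma fEst_eq (H : SimpleGraph (Fin n)) (kstar β : ℝ) :
    fEst H kstar β
      = (∑ u, ∑ v ∈ Finset.univ.erase u, valPair H kstar β u v) / 2 := by
  rw [fEst]
  congr 1
  refine Finset.sum_congr rfl fun u _ => ?_
  have he : Finset.univ.erase u = Finset.univ.filter (fun v => u ≠ v) := by
    ext v; simp [ne_comm, eq_comm]
  rw [he, Finset.sum_filter]

lemma one_sub_min_le {a b : ℝ} (ha : a ≤ 1) (hb : b ≤ 1) :
    1 - min a b ≤ (1 - a) + (1 - b) := by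
  rcases le_total a b with h | h
  · rw [min_eq_left h]; linarith
  · rw [min_eq_right h]; linarith

lemma sum_sum_one_sub_W_le (hn : 2 ≤ n) (H : SimpleGraph (Fin n)) (kstar β : ℝ)
    (hβ : 0 < β) (i : Fin n) :
    ∑ u ∈ Finset.univ.erase i, ∑ v ∈ (Finset.univ.erase i).erase u,
        (1 - min (wt H kstar β u) (wt H kstar β v))
      ≤ 2 * ((n:ℝ) - 1) * (kOf H kstar : ℝ) := by
  have hsum := sum_one_sub_wt_le (by omega : 0 < n) H kstar β hβ
  have hptwise : ∀ u ∈ Finset.univ.erase i,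
      ∑ v ∈ (Finset.univ.erase i).erase u,
        (1 - min (wt H kstar β u) (wt H kstar β v))
      ≤ ((n:ℝ)-1) * (1 - wt H kstar β u) + (kOf H kstar : ℝ) := by
    intro u _
    calc ∑ v ∈ (Finset.univ.erase i).erase u,
          (1 - min (wt H kstar β u) (wt H kstar β v))
        ≤ ∑ v ∈ (Finset.univ.erase i).erase u,
            ((1 - wt H kstar β u) + (1 - wt H kstar β v)) := by
          apply Finset.sum_le_sum
          intro v _
          exact one_sub_min_le (wt_le_one H kstar β hβ u) (wt_le_one H kstar β hβ v)
      _ = (((Finset.univ.erase i).erase u).card : ℝ) * (1 - wt H kstar β u)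
          + ∑ v ∈ (Finset.univ.erase i).erase u, (1 - wt H kstar β v) := by
          rw [Finset.sum_add_distrib, Finset.sum_const, nsmul_eq_mul]
      _ ≤ ((n:ℝ)-1) * (1 - wt H kstar β u)
          + ∑ v : Fin n, (1 - wt H kstar β v) := by
          refine add_le_add ?_ ?_
          · refine mul_le_mul_of_nonneg_right ?_
              (by linarith [wt_le_one H kstar β hβ u])
            have h1 : ((Finset.univ.erase i).erase u).card ≤ (Finset.univ.erase i).card :=
              Finset.card_le_card (Finset.erase_subset _ _)
            have h2 : ((Finset.univ.erase i).card : ℝ) = (n:ℝ) - 1 := card_erase_univ hn i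
            calc (((Finset.univ.erase i).erase u).card : ℝ)
                ≤ ((Finset.univ.erase i).card : ℝ) := by exact_mod_cast h1
              _ = (n:ℝ) - 1 := h2
          · refine Finset.sum_le_sum_of_subset_of_nonneg (Finset.subset_univ _) ?_
            intro v _ _
            linarith [wt_le_one H kstar β hβ v]
      _ ≤ ((n:ℝ)-1) * (1 - wt H kstar β u) + (kOf H kstar : ℝ) := by linarith
  calc ∑ u ∈ Finset.univ.erase i, ∑ v ∈ (Finset.univ.erase i).erase u,
        (1 - min (wt H kstar β u) (wt H kstar β v))
      ≤ ∑ u ∈ Finset.univ.erase i,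
          (((n:ℝ)-1) * (1 - wt H kstar β u) + (kOf H kstar : ℝ)) :=
        Finset.sum_le_sum hptwise
    _ = ((n:ℝ)-1) * (∑ u ∈ Finset.univ.erase i, (1 - wt H kstar β u))
        + ((Finset.univ.erase i).card : ℝ) * (kOf H kstar : ℝ) := by
        rw [Finset.sum_add_distrib, Finset.mul_sum, Finset.sum_const, nsmul_eq_mul]
    _ ≤ ((n:ℝ)-1) * (kOf H kstar : ℝ) + ((n:ℝ)-1) * (kOf H kstar : ℝ) := by
        refine add_le_add ?_ ?_
        · refine mul_le_mul_of_nonneg_left ?_ (by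
            have : (2:ℝ) ≤ n := by exact_mod_cast hn
            linarith)
          calc ∑ u ∈ Finset.univ.erase i, (1 - wt H kstar β u)
              ≤ ∑ u : Fin n, (1 - wt H kstar β u) := by
                refine Finset.sum_le_sum_of_subset_of_nonneg (Finset.subset_univ _) ?_
                intro v _ _
                linarith [wt_le_one H kstar β hβ v]
            _ ≤ _ := sum_one_sub_wt_le (by omega) H kstar β hβ
        · rw [card_erase_univ hn i]
    _ = 2 * ((n:ℝ) - 1) * (kOf H kstar : ℝ) := by ring

lemma one_sub_W_nonneg (H : SimpleGraph (Fin n)) (kstar β : ℝ) (hβ : 0 < β)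
    (u v : Fin n) : 0 ≤ 1 - min (wt H kstar β u) (wt H kstar β v) := by
  have := wt_le_one H kstar β hβ u
  have := wt_le_one H kstar β hβ v
  rcases le_total (wt H kstar β u) (wt H kstar β v) with h | h
  · rw [min_eq_left h]; linarith
  · rw [min_eq_right h]; linarith

end Aux6
section Aux7
variable {n : ℕ} {G G' : SimpleGraph (Fin n)} {i : Fin n}
variable (hi : ∀ u v : Fin n, ¬ (G.Adj u v ↔ G'.Adj u v) → u = i ∨ v = i)
include hi

lemma W_diff_le (hn : 2 ≤ n) (kstar β : ℝ) (hks : 0 ≤ kstar) (hβ : 0 < β)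
    {u v : Fin n} (hu : u ≠ i) (hv : v ≠ i) :
    |min (wt G kstar β u) (wt G kstar β v) - min (wt G' kstar β u) (wt G' kstar β v)|
      ≤ 6 * β :=
  (abs_min_sub_min_le_max _ _ _ _).trans
    (max_le (wt_diff_le hi hn kstar β hks hβ hu) (wt_diff_le hi hn kstar β hks hβ hv))

lemma g_abs_le (hn : 2 ≤ n) (kstar β : ℝ) (hks : 0 ≤ kstar) (hβ : 0 < β)
    {u v : Fin n} (hu : u ≠ i) (hv : v ≠ i) :
    |(min (wt G kstar β u) (wt G kstar β v)
        - min (wt G' kstar β u) (wt G' kstar β v)) * (xe G u v - edgeDensity G)|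
      ≤ 6 * β := by
  rw [abs_mul]
  calc _ ≤ (6*β) * 1 := by
        refine mul_le_mul (W_diff_le hi hn kstar β hks hβ hu hv)
          (xp_abs_le hn G u v) (abs_nonneg _) (by positivity)
    _ = 6*β := mul_one _

lemma BB_bound (hn : 2 ≤ n) (kstar β : ℝ) (hks : 0 ≤ kstar) (hβ : 0 < β)
    (S : Finset (Fin n)) (K : ℝ) (hK : (S.card : ℝ) ≤ K) (hS : ∀ v ∈ S, v ≠ i) :
    |∑ u ∈ S, ∑ v ∈ S.erase u,
        (min (wt G kstar β u) (wt G kstar β v)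
          - min (wt G' kstar β u) (wt G' kstar β v)) * (xe G u v - edgeDensity G)|
      ≤ 6 * β * K^2 := by
  have hK0 : 0 ≤ K := le_trans (by positivity) hK
  refine le_trans (Finset.abs_sum_le_sum_abs _ _) ?_
  calc ∑ u ∈ S, |∑ v ∈ S.erase u, _|
      ≤ ∑ u ∈ S, (K * (6*β)) := by
        refine Finset.sum_le_sum fun u hu => ?_
        refine le_trans (Finset.abs_sum_le_sum_abs _ _) ?_
        calc ∑ v ∈ S.erase u, |(min (wt G kstar β u) (wt G kstar β v)
              - min (wt G' kstar β u) (wt G' kstar β v)) * (xe G u v - edgeDensity G)|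
            ≤ ∑ v ∈ S.erase u, (6*β) := by
              refine Finset.sum_le_sum fun v hv => ?_
              exact g_abs_le hi hn kstar β hks hβ (hS u hu)
                (hS v (Finset.mem_of_mem_erase hv))
          _ = ((S.erase u).card : ℝ) * (6*β) := by
              rw [Finset.sum_const, nsmul_eq_mul]
          _ ≤ K * (6*β) := by
              refine mul_le_mul_of_nonneg_right ?_ (by positivity)
              refine le_trans ?_ hK
              exact_mod_cast Finset.card_le_card (Finset.erase_subset _ _)
    _ = (S.card : ℝ) * (K * (6*β)) := by rw [Finset.sum_const, nsmul_eq_mul]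
    _ ≤ K * (K * (6*β)) := by
        refine mul_le_mul_of_nonneg_right hK (by positivity)
    _ = 6 * β * K^2 := by ring

lemma cross_bound (hn : 2 ≤ n) (kstar β : ℝ) (hks : 0 ≤ kstar) (hβ : 0 < β)
    (S : Finset (Fin n)) (K : ℝ) (hK0 : 0 ≤ K)
    (hgood : ∀ v ∈ S, wt G kstar β v = 1 ∧ wt G' kstar β v = 1)
    {u : Fin n} (hu : u ≠ i) (hnu : u ∉ S)
    (hcard : (((Finset.univ.erase u) \ S).card : ℝ) ≤ K) :
    |∑ v ∈ S,
        (min (wt G kstar β u) (wt G kstar β v)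
          - min (wt G' kstar β u) (wt G' kstar β v)) * (xe G u v - edgeDensity G)|
      ≤ 6 + β * (36 + 6*kstar + 18*(kOf G kstar : ℝ) + 6*K) := by
  have hk0 : (0:ℝ) ≤ (kOf G kstar : ℝ) := Nat.cast_nonneg _
  have hCB0 : 0 ≤ 6 + β * (36 + 6*kstar + 18*(kOf G kstar : ℝ) + 6*K) := by
    have : 0 ≤ (36 + 6*kstar + 18*(kOf G kstar : ℝ) + 6*K) := by linarith
    nlinarith
  have hrep : ∑ v ∈ S,
      (min (wt G kstar β u) (wt G kstar β v)
        - min (wt G' kstar β u) (wt G' kstar β v)) * (xe G u v - edgeDensity G)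
      = (wt G kstar β u - wt G' kstar β u) * ∑ v ∈ S, (xe G u v - edgeDensity G) := by
    rw [Finset.mul_sum]
    refine Finset.sum_congr rfl fun v hv => ?_
    obtain ⟨h1, h2⟩ := hgood v hv
    rw [h1, h2, min_eq_left (wt_le_one G kstar β hβ u),
      min_eq_left (wt_le_one G' kstar β hβ u)]
  rw [hrep, abs_mul]
  by_cases hww : wt G kstar β u = wt G' kstar β u
  · rw [hww, sub_self, abs_zero, zero_mul]
    exact hCB0
  · have hwpos : 0 < wt G kstar β u ∨ 0 < wt G' kstar β u := by
      rcases (wt_nonneg G kstar β u).lt_or_eq with h | h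
      · exact Or.inl h
      · rcases (wt_nonneg G' kstar β u).lt_or_eq with h' | h'
        · exact Or.inr h'
        · exact absurd (h.symm.trans h') hww
    have htle : ∀ (H : SimpleGraph (Fin n)), 0 < wt H kstar β u →
        tDist H kstar u < 1/β := by
      intro H hpos
      rw [wt, lt_max_iff] at hpos
      rcases hpos with h | h
      · exact absurd h (lt_irrefl 0)
      · rw [lt_div_iff₀ hβ]
        nlinarith
    have htu : tDist G kstar u ≤ 1/β + 6 := by
      rcases hwpos with h | h
      · linarith [htle G h]
      · have := htle G' h
        have hd := tDist_diff_le hi hn kstar hks hu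
        rw [abs_le] at hd
        linarith [hd.1]
    have hwd : |wt G kstar β u - wt G' kstar β u| ≤ 6*β :=
      wt_diff_le hi hn kstar β hks hβ hu
    have hSsub : S ⊆ Finset.univ.erase u := fun v hv =>
      Finset.mem_erase.mpr ⟨fun he => hnu (he ▸ hv), Finset.mem_univ v⟩
    have hsd := Finset.sum_sdiff (f := fun v => xe G u v - edgeDensity G) hSsub
    have hdeg := sum_xp hn G u
    have hsdabs : |∑ v ∈ (Finset.univ.erase u) \ S, (xe G u v - edgeDensity G)| ≤ K := by
      refine le_trans (Finset.abs_sum_le_sum_abs _ _) ?_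
      calc ∑ v ∈ (Finset.univ.erase u) \ S, |xe G u v - edgeDensity G|
          ≤ ∑ v ∈ (Finset.univ.erase u) \ S, (1:ℝ) :=
            Finset.sum_le_sum fun v _ => xp_abs_le hn G u v
        _ = ((((Finset.univ.erase u) \ S)).card : ℝ) := by simp
        _ ≤ K := hcard
    have hSabs : |∑ v ∈ S, (xe G u v - edgeDensity G)|
        ≤ (1/β + 6 + kstar + 3*(kOf G kstar : ℝ)) + K := by
      have he : ∑ v ∈ S, (xe G u v - edgeDensity G)
          = ((deg G u : ℝ) - avgDeg G)
            - ∑ v ∈ (Finset.univ.erase u) \ S, (xe G u v - edgeDensity G) := by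
        rw [← hdeg, ← hsd]; ring
      rw [he]
      refine le_trans (abs_sub _ _) ?_
      have := abs_tDist_le G kstar u
      linarith
    calc |wt G kstar β u - wt G' kstar β u| * |∑ v ∈ S, (xe G u v - edgeDensity G)|
        ≤ (6*β) * ((1/β + 6 + kstar + 3*(kOf G kstar : ℝ)) + K) := by
          refine mul_le_mul hwd hSabs (abs_nonneg _) (by positivity)
      _ = 6 + β * (36 + 6*kstar + 18*(kOf G kstar : ℝ) + 6*K) := by
          field_simp
          ring
end Aux7
section Aux8
variable {n : ℕ} {G G' : SimpleGraph (Fin n)} {i : Fin n}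
variable (hi : ∀ u v : Fin n, ¬ (G.Adj u v ↔ G'.Adj u v) → u = i ∨ v = i)
include hi

lemma IP_bound (hn : 2 ≤ n) (kstar β : ℝ) (hks : 0 ≤ kstar) (hβ : 0 < β) :
    |∑ v ∈ Finset.univ.erase i, (valPair G kstar β i v - valPair G' kstar β i v)|
      ≤ 2 + (kstar + 4*(kOf G kstar:ℝ) + 1/β) + (kstar + 4*(kOf G' kstar:ℝ) + 1/β) := by
  have hnR : (2:ℝ) ≤ n := by exact_mod_cast hn
  have hrw : ∑ v ∈ Finset.univ.erase i, (valPair G kstar β i v - valPair G' kstar β i v)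
      = ((n:ℝ)-1) * (edgeDensity G - edgeDensity G')
        + (∑ v ∈ Finset.univ.erase i,
            min (wt G kstar β i) (wt G kstar β v) * (xe G i v - edgeDensity G))
        - (∑ v ∈ Finset.univ.erase i,
            min (wt G' kstar β i) (wt G' kstar β v) * (xe G' i v - edgeDensity G')) := by
    have e1 : ∀ v ∈ Finset.univ.erase i,
        valPair G kstar β i v - valPair G' kstar β i v
        = (edgeDensity G - edgeDensity G')
          + (min (wt G kstar β i) (wt G kstar β v) * (xe G i v - edgeDensity G)
            - min (wt G' kstar β i) (wt G' kstar β v) * (xe G' i v - edgeDensity G')) := by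
      intro v _
      rw [valPair_eq, valPair_eq]
      ring
    have hsum1 : ∑ _v ∈ Finset.univ.erase i, (edgeDensity G - edgeDensity G')
        = ((n:ℝ)-1) * (edgeDensity G - edgeDensity G') := by
      rw [Finset.sum_const, nsmul_eq_mul, card_erase_univ hn i]
    rw [Finset.sum_congr rfl e1, Finset.sum_add_distrib, hsum1, Finset.sum_sub_distrib]
    ring
  rw [hrw]
  have h1 : |((n:ℝ)-1) * (edgeDensity G - edgeDensity G')| ≤ 2 := by
    rw [abs_mul, abs_of_nonneg (by linarith : (0:ℝ) ≤ (n:ℝ)-1)]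
    have hd := edgeDensity_diff_le hi hn
    calc ((n:ℝ)-1) * |edgeDensity G - edgeDensity G'|
        ≤ ((n:ℝ)-1) * (2/(n:ℝ)) := mul_le_mul_of_nonneg_left hd (by linarith)
      _ ≤ 2 := by
          rw [mul_comm, div_mul_eq_mul_div, div_le_iff₀ (by linarith : (0:ℝ) < n)]
          nlinarith
  have h2 := lemmaA hn G kstar β hks hβ i
  have h3 := lemmaA hn G' kstar β hks hβ i
  refine le_trans (abs_sub _ _) (le_trans (add_le_add_left (abs_add_le _ _) _) ?_)
  linarith

lemma NP_bound (hn : 2 ≤ n) (kstar β : ℝ) (hks : 0 ≤ kstar) (hβ : 0 < β) :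
    |∑ u ∈ Finset.univ.erase i, ∑ v ∈ (Finset.univ.erase i).erase u,
        (valPair G kstar β u v - valPair G' kstar β u v)|
      ≤ 4*(kOf G' kstar:ℝ)
        + 6*β*((kOf G kstar:ℝ)+(kOf G' kstar:ℝ))^2
        + 2*((kOf G kstar:ℝ)+(kOf G' kstar:ℝ))
            *(6 + β*(36 + 6*kstar + 18*(kOf G kstar:ℝ)
              + 6*((kOf G kstar:ℝ)+(kOf G' kstar:ℝ)))) := by
  classical
  have hnR : (2:ℝ) ≤ n := by exact_mod_cast hn
  have hk0 : (0:ℝ) ≤ (kOf G kstar : ℝ) := Nat.cast_nonneg _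
  have hk0' : (0:ℝ) ≤ (kOf G' kstar : ℝ) := Nat.cast_nonneg _
  set A : Finset (Fin n) := Finset.univ.erase i with hA
  set Bset : Finset (Fin n) :=
    Finset.univ.filter (fun v => 0 < tDist G kstar v ∨ 0 < tDist G' kstar v) with hBdef
  set AB : Finset (Fin n) := A.filter (fun v => v ∈ Bset) with hABdef
  set AG : Finset (Fin n) := A.filter (fun v => v ∉ Bset) with hAGdef
  have hAni : ∀ v ∈ A, v ≠ i := fun v hv => (Finset.mem_erase.mp hv).1
  have hABni : ∀ v ∈ AB, v ≠ i := fun v hv => hAni v (Finset.mem_filter.mp hv).1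
  have hgoodAG : ∀ v ∈ AG, wt G kstar β v = 1 ∧ wt G' kstar β v = 1 := by
    intro v hv
    have hvB : v ∉ Bset := (Finset.mem_filter.mp hv).2
    rw [hBdef, Finset.mem_filter] at hvB
    push_neg at hvB
    have h1 := hvB (Finset.mem_univ v)
    constructor
    · exact wt_eq_one G kstar β v (le_antisymm h1.1 (tDist_nonneg G kstar v))
    · exact wt_eq_one G' kstar β v (le_antisymm h1.2 (tDist_nonneg G' kstar v))
  have hBk : (Bset.card : ℝ) ≤ (kOf G kstar:ℝ) + (kOf G' kstar:ℝ) := by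
    have hun : Bset = Finset.univ.filter (fun v => 0 < tDist G kstar v)
        ∪ Finset.univ.filter (fun v => 0 < tDist G' kstar v) := by
      rw [hBdef, Finset.filter_or]
    have hc1 : (Finset.univ.filter (fun v => 0 < tDist G kstar v)).card ≤ kOf G kstar := by
      have he : (Finset.univ.filter (fun v => 0 < tDist G kstar v)).card
          = farCount G kstar (kOf G kstar) := by
        rw [farCount_eq_filter]
        congr 1; ext v; simp [tDist_pos_iff]
      rw [he]; exact (kOf_spec (by omega) G kstar).2
    have hc2 : (Finset.univ.filter (fun v => 0 < tDist G' kstar v)).card ≤ kOf G' kstar := by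
      have he : (Finset.univ.filter (fun v => 0 < tDist G' kstar v)).card
          = farCount G' kstar (kOf G' kstar) := by
        rw [farCount_eq_filter]
        congr 1; ext v; simp [tDist_pos_iff]
      rw [he]; exact (kOf_spec (by omega) G' kstar).2
    have := Finset.card_union_le (Finset.univ.filter (fun v => 0 < tDist G kstar v))
      (Finset.univ.filter (fun v => 0 < tDist G' kstar v))
    rw [← hun] at this
    have hcard : Bset.card ≤ kOf G kstar + kOf G' kstar := le_trans this (by omega)
    push_cast
    exact_mod_cast hcard
  have hABk : (AB.card : ℝ) ≤ (kOf G kstar:ℝ) + (kOf G' kstar:ℝ) := by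
    refine le_trans ?_ hBk
    have : AB ⊆ Bset := fun v hv => (Finset.mem_filter.mp hv).2
    exact_mod_cast Finset.card_le_card this
  -- pointwise decomposition on A pairs
  have hxeq : ∀ u ∈ A, ∀ v ∈ A.erase u, xe G u v = xe G' u v := by
    intro u hu v hv
    exact xe_eq_of_ne hi (hAni u hu) (hAni v (Finset.mem_of_mem_erase hv))
  have hNsplit : ∑ u ∈ A, ∑ v ∈ A.erase u,
      (valPair G kstar β u v - valPair G' kstar β u v)
      = (edgeDensity G - edgeDensity G')
          * (∑ u ∈ A, ∑ v ∈ A.erase u,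
              (1 - min (wt G' kstar β u) (wt G' kstar β v)))
        + ∑ u ∈ A, ∑ v ∈ A.erase u,
            (min (wt G kstar β u) (wt G kstar β v)
              - min (wt G' kstar β u) (wt G' kstar β v)) * (xe G u v - edgeDensity G) := by
    rw [Finset.mul_sum, ← Finset.sum_add_distrib]
    refine Finset.sum_congr rfl fun u hu => ?_
    rw [Finset.mul_sum, ← Finset.sum_add_distrib]
    refine Finset.sum_congr rfl fun v hv => ?_
    rw [valPair_eq, valPair_eq, ← hxeq u hu v hv]
    ring
  rw [hNsplit]
  -- T1 bound
  have hT1 : |(edgeDensity G - edgeDensity G')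
      * (∑ u ∈ A, ∑ v ∈ A.erase u,
          (1 - min (wt G' kstar β u) (wt G' kstar β v)))|
      ≤ 4*(kOf G' kstar:ℝ) := by
    rw [abs_mul]
    have h0 : 0 ≤ ∑ u ∈ A, ∑ v ∈ A.erase u,
        (1 - min (wt G' kstar β u) (wt G' kstar β v)) := by
      refine Finset.sum_nonneg fun u _ => Finset.sum_nonneg fun v _ => ?_
      exact one_sub_W_nonneg G' kstar β hβ u v
    have hub := sum_sum_one_sub_W_le hn G' kstar β hβ i
    rw [abs_of_nonneg h0]
    have hd := edgeDensity_diff_le hi hn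
    calc |edgeDensity G - edgeDensity G'| * _
        ≤ (2/(n:ℝ)) * (2 * ((n:ℝ)-1) * (kOf G' kstar:ℝ)) := by
          refine mul_le_mul hd hub h0 (by positivity)
      _ ≤ 4*(kOf G' kstar:ℝ) := by
          rw [div_mul_eq_mul_div, div_le_iff₀ (by linarith : (0:ℝ) < n)]
          nlinarith
  -- T2 decomposition
  have hmemAB : ∀ u ∈ AB, u ∈ Bset := fun u hu => (Finset.mem_filter.mp hu).2
  have hmemAG : ∀ u ∈ AG, u ∉ Bset := fun u hu => (Finset.mem_filter.mp hu).2
  have hT2a : ∑ u ∈ A, ∑ v ∈ A.erase u,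
      (min (wt G kstar β u) (wt G kstar β v)
        - min (wt G' kstar β u) (wt G' kstar β v)) * (xe G u v - edgeDensity G)
      = (∑ u ∈ AB, ∑ v ∈ A.erase u,
          (min (wt G kstar β u) (wt G kstar β v)
            - min (wt G' kstar β u) (wt G' kstar β v)) * (xe G u v - edgeDensity G))
        + ∑ u ∈ AG, ∑ v ∈ A.erase u,
          (min (wt G kstar β u) (wt G kstar β v)
            - min (wt G' kstar β u) (wt G' kstar β v)) * (xe G u v - edgeDensity G) := by
    rw [hABdef, hAGdef]
    exact (Finset.sum_filter_add_sum_filter_not A (fun v => v ∈ Bset) _).symm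
  -- good-u inner sums reduce to AB
  have hgvanish : ∀ u ∈ AG, ∀ v, v ∈ A.erase u → v ∉ AB →
      (min (wt G kstar β u) (wt G kstar β v)
        - min (wt G' kstar β u) (wt G' kstar β v)) * (xe G u v - edgeDensity G) = 0 := by
    intro u hu v hv hvAB
    have hvA : v ∈ A := Finset.mem_of_mem_erase hv
    have hvB : v ∉ Bset := fun hb => hvAB (Finset.mem_filter.mpr ⟨hvA, hb⟩)
    have hvAG : v ∈ AG := Finset.mem_filter.mpr ⟨hvA, hvB⟩
    obtain ⟨hu1, hu2⟩ := hgoodAG u hu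
    obtain ⟨hv1, hv2⟩ := hgoodAG v hvAG
    rw [hu1, hu2, hv1, hv2, sub_self, zero_mul]
  have hgoodpart : ∑ u ∈ AG, ∑ v ∈ A.erase u,
      (min (wt G kstar β u) (wt G kstar β v)
        - min (wt G' kstar β u) (wt G' kstar β v)) * (xe G u v - edgeDensity G)
      = ∑ u ∈ AB, ∑ v ∈ AG,
        (min (wt G kstar β u) (wt G kstar β v)
          - min (wt G' kstar β u) (wt G' kstar β v)) * (xe G u v - edgeDensity G) := by
    have step1 : ∀ u ∈ AG, ∑ v ∈ A.erase u,
        (min (wt G kstar β u) (wt G kstar β v)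
          - min (wt G' kstar β u) (wt G' kstar β v)) * (xe G u v - edgeDensity G)
        = ∑ v ∈ AB,
          (min (wt G kstar β u) (wt G kstar β v)
            - min (wt G' kstar β u) (wt G' kstar β v)) * (xe G u v - edgeDensity G) := by
      intro u hu
      refine (Finset.sum_subset ?_ (hgvanish u hu)).symm
      intro v hv
      have hvA : v ∈ A := (Finset.mem_filter.mp hv).1
      refine Finset.mem_erase.mpr ⟨?_, hvA⟩
      intro he
      exact hmemAG u hu (he ▸ hmemAB v hv)
    rw [Finset.sum_congr rfl step1, Finset.sum_comm]
    refine Finset.sum_congr rfl fun v hv => Finset.sum_congr rfl fun u hu => ?_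
    rw [min_comm (wt G kstar β u), min_comm (wt G' kstar β u), xe_symm]
  -- bad-u inner split
  have hbadsplit : ∀ u ∈ AB, ∑ v ∈ A.erase u,
      (min (wt G kstar β u) (wt G kstar β v)
        - min (wt G' kstar β u) (wt G' kstar β v)) * (xe G u v - edgeDensity G)
      = (∑ v ∈ AB.erase u,
          (min (wt G kstar β u) (wt G kstar β v)
            - min (wt G' kstar β u) (wt G' kstar β v)) * (xe G u v - edgeDensity G))
        + ∑ v ∈ AG,
          (min (wt G kstar β u) (wt G kstar β v)
            - min (wt G' kstar β u) (wt G' kstar β v)) * (xe G u v - edgeDensity G) := by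
    intro u hu
    have huB : u ∈ Bset := hmemAB u hu
    rw [← Finset.sum_filter_add_sum_filter_not (A.erase u) (fun v => v ∈ Bset)]
    congr 1
    · refine Finset.sum_congr ?_ (fun _ _ => rfl)
      ext v
      simp only [Finset.mem_filter, Finset.mem_erase, hABdef]
      tauto
    · refine Finset.sum_congr ?_ (fun _ _ => rfl)
      ext v
      simp only [Finset.mem_filter, Finset.mem_erase, hAGdef]
      constructor
      · rintro ⟨⟨hvu, hvA⟩, hvB⟩
        exact ⟨hvA, hvB⟩
      · rintro ⟨hvA, hvB⟩
        exact ⟨⟨fun he => hvB (he ▸ huB), hvA⟩, hvB⟩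
  -- assemble T2
  have hT2 : ∑ u ∈ A, ∑ v ∈ A.erase u,
      (min (wt G kstar β u) (wt G kstar β v)
        - min (wt G' kstar β u) (wt G' kstar β v)) * (xe G u v - edgeDensity G)
      = (∑ u ∈ AB, ∑ v ∈ AB.erase u,
          (min (wt G kstar β u) (wt G kstar β v)
            - min (wt G' kstar β u) (wt G' kstar β v)) * (xe G u v - edgeDensity G))
        + 2 * ∑ u ∈ AB, ∑ v ∈ AG,
          (min (wt G kstar β u) (wt G kstar β v)
            - min (wt G' kstar β u) (wt G' kstar β v)) * (xe G u v - edgeDensity G) := by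
    rw [hT2a, hgoodpart, Finset.sum_congr rfl hbadsplit, Finset.sum_add_distrib]
    ring
  -- bound BB
  have hBB := BB_bound hi hn kstar β hks hβ AB ((kOf G kstar:ℝ) + (kOf G' kstar:ℝ))
    hABk hABni
  -- bound cross
  have hCB0 : 0 ≤ 6 + β * (36 + 6*kstar + 18*(kOf G kstar : ℝ)
      + 6*((kOf G kstar:ℝ) + (kOf G' kstar:ℝ))) := by
    have h1 : 0 ≤ (36 + 6*kstar + 18*(kOf G kstar : ℝ)
        + 6*((kOf G kstar:ℝ) + (kOf G' kstar:ℝ))) := by linarith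
    nlinarith
  have hcross : ∀ u ∈ AB, |∑ v ∈ AG,
      (min (wt G kstar β u) (wt G kstar β v)
        - min (wt G' kstar β u) (wt G' kstar β v)) * (xe G u v - edgeDensity G)|
      ≤ 6 + β * (36 + 6*kstar + 18*(kOf G kstar : ℝ)
          + 6*((kOf G kstar:ℝ) + (kOf G' kstar:ℝ))) := by
    intro u hu
    have huB : u ∈ Bset := hmemAB u hu
    have huA : u ∈ A := (Finset.mem_filter.mp hu).1
    have hnuAG : u ∉ AG := fun h => hmemAG u h huB
    have hcardsd : (((Finset.univ.erase u) \ AG).card : ℝ)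
        ≤ (kOf G kstar:ℝ) + (kOf G' kstar:ℝ) := by
      have hsub : AG ⊆ Finset.univ.erase u := fun v hv =>
        Finset.mem_erase.mpr ⟨fun he => hnuAG (he ▸ hv), Finset.mem_univ v⟩
      have hcAG : AB.card + AG.card = A.card := by
        rw [hABdef, hAGdef]
        exact Finset.card_filter_add_card_filter_not _
      have hcA : (A.card : ℝ) = (n:ℝ) - 1 := card_erase_univ hn i
      have hceu : ((Finset.univ.erase u).card : ℝ) = (n:ℝ) - 1 := card_erase_univ hn u
      have hsd : (((Finset.univ.erase u) \ AG).card : ℝ)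
          = ((Finset.univ.erase u).card : ℝ) - (AG.card : ℝ) := by
        rw [Finset.card_sdiff_of_subset hsub]
        rw [Nat.cast_sub (Finset.card_le_card hsub)]
      rw [hsd, hceu]
      have : (AB.card : ℝ) + (AG.card : ℝ) = (n:ℝ) - 1 := by
        rw [← hcA]; exact_mod_cast hcAG
      linarith
    exact cross_bound hi hn kstar β hks hβ AG
      ((kOf G kstar:ℝ) + (kOf G' kstar:ℝ)) (by linarith) hgoodAG
      (hAni u huA) hnuAG hcardsd
  have hCRtot : |∑ u ∈ AB, ∑ v ∈ AG,
      (min (wt G kstar β u) (wt G kstar β v)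
        - min (wt G' kstar β u) (wt G' kstar β v)) * (xe G u v - edgeDensity G)|
      ≤ ((kOf G kstar:ℝ) + (kOf G' kstar:ℝ))
        * (6 + β * (36 + 6*kstar + 18*(kOf G kstar : ℝ)
          + 6*((kOf G kstar:ℝ) + (kOf G' kstar:ℝ)))) := by
    refine le_trans (Finset.abs_sum_le_sum_abs _ _) ?_
    calc ∑ u ∈ AB, |∑ v ∈ AG, _|
        ≤ ∑ u ∈ AB, (6 + β * (36 + 6*kstar + 18*(kOf G kstar : ℝ)
            + 6*((kOf G kstar:ℝ) + (kOf G' kstar:ℝ)))) := Finset.sum_le_sum hcross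
      _ = (AB.card : ℝ) * _ := by rw [Finset.sum_const, nsmul_eq_mul]
      _ ≤ _ := mul_le_mul_of_nonneg_right hABk hCB0
  -- final assembly
  refine le_trans (abs_add_le _ _) ?_
  rw [hT2]
  refine le_trans (add_le_add_right (abs_add_le _ _) _) ?_
  have h2abs : |2 * ∑ u ∈ AB, ∑ v ∈ AG,
      (min (wt G kstar β u) (wt G kstar β v)
        - min (wt G' kstar β u) (wt G' kstar β v)) * (xe G u v - edgeDensity G)|
      = 2 * |∑ u ∈ AB, ∑ v ∈ AG,
      (min (wt G kstar β u) (wt G kstar β v)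
        - min (wt G' kstar β u) (wt G' kstar β v)) * (xe G u v - edgeDensity G)| := by
    rw [abs_mul, abs_two]
  rw [h2abs]
  linarith

end Aux8
section Aux9
variable {n : ℕ} {G G' : SimpleGraph (Fin n)} {i : Fin n}
variable (hi : ∀ u v : Fin n, ¬ (G.Adj u v ↔ G'.Adj u v) → u = i ∨ v = i)
include hi

lemma main_bound (hn : 2 ≤ n) (kstar β : ℝ) (hks : 0 ≤ kstar) (hβ : 0 < β) :
    |fEst G kstar β - fEst G' kstar β| ≤
      2 + (kstar + 4*(kOf G kstar:ℝ) + 1/β) + (kstar + 4*(kOf G' kstar:ℝ) + 1/β)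
      + 2*(kOf G' kstar:ℝ)
      + 3*β*((kOf G kstar:ℝ)+(kOf G' kstar:ℝ))^2
      + ((kOf G kstar:ℝ)+(kOf G' kstar:ℝ))
          *(6 + β*(36 + 6*kstar + 18*(kOf G kstar:ℝ)
            + 6*((kOf G kstar:ℝ)+(kOf G' kstar:ℝ)))) := by
  have hfd : fEst G kstar β - fEst G' kstar β
      = (∑ u, ∑ v ∈ Finset.univ.erase u,
          (valPair G kstar β u v - valPair G' kstar β u v)) / 2 := by
    rw [fEst_eq, fEst_eq, div_sub_div_same]
    congr 1
    rw [← Finset.sum_sub_distrib]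
    exact Finset.sum_congr rfl fun u _ => (Finset.sum_sub_distrib _ _).symm
  have hsplit : ∑ u, ∑ v ∈ Finset.univ.erase u,
      (valPair G kstar β u v - valPair G' kstar β u v)
      = (∑ u ∈ Finset.univ.erase i,
          ((valPair G kstar β u i - valPair G' kstar β u i)
            + ∑ v ∈ (Finset.univ.erase i).erase u,
              (valPair G kstar β u v - valPair G' kstar β u v)))
        + ∑ v ∈ Finset.univ.erase i,
            (valPair G kstar β i v - valPair G' kstar β i v) := by
    rw [← Finset.sum_erase_add Finset.univ _ (Finset.mem_univ i)]
    congr 1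
    refine Finset.sum_congr rfl fun u hu => ?_
    have hui : u ≠ i := (Finset.mem_erase.mp hu).1
    have hiu : i ∈ Finset.univ.erase u :=
      Finset.mem_erase.mpr ⟨Ne.symm hui, Finset.mem_univ i⟩
    rw [← Finset.add_sum_erase _ _ hiu, Finset.erase_right_comm]
  have hDi : ∑ u ∈ Finset.univ.erase i,
      (valPair G kstar β u i - valPair G' kstar β u i)
      = ∑ v ∈ Finset.univ.erase i,
        (valPair G kstar β i v - valPair G' kstar β i v) :=
    Finset.sum_congr rfl fun u _ => by
      rw [valPair_symm G kstar β u i, valPair_symm G' kstar β u i]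
  have hIP := IP_bound hi hn kstar β hks hβ
  have hNP := NP_bound hi hn kstar β hks hβ
  have hD : |∑ u, ∑ v ∈ Finset.univ.erase u,
      (valPair G kstar β u v - valPair G' kstar β u v)|
      ≤ 2 * (2 + (kstar + 4*(kOf G kstar:ℝ) + 1/β) + (kstar + 4*(kOf G' kstar:ℝ) + 1/β))
        + (4*(kOf G' kstar:ℝ)
          + 6*β*((kOf G kstar:ℝ)+(kOf G' kstar:ℝ))^2
          + 2*((kOf G kstar:ℝ)+(kOf G' kstar:ℝ))
              *(6 + β*(36 + 6*kstar + 18*(kOf G kstar:ℝ)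
                + 6*((kOf G kstar:ℝ)+(kOf G' kstar:ℝ))))) := by
    rw [hsplit, Finset.sum_add_distrib, hDi]
    refine le_trans (abs_add_le _ _) (le_trans (add_le_add_left (abs_add_le _ _) _) ?_)
    linarith
  rw [hfd, abs_div, abs_two]
  linarith
end Aux9
section Aux10

lemma arith_bound (k k' kstar β : ℝ) (hk : 1 ≤ k) (hk' : 1 ≤ k') (hkk : k' ≤ k + 1)
    (hks : 0 ≤ kstar) (hβ : 0 < β) (hβ1 : β ≤ 1) :
    2 + (kstar + 4*k + 1/β) + (kstar + 4*k' + 1/β) + 2*k' + 3*β*(k+k')^2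
      + (k+k')*(6 + β*(36 + 6*kstar + 18*k + 6*(k+k')))
      ≤ 300*((k+kstar)*(1+β*k) + 1/β) := by
  have h1β : 1 ≤ 1/β := by rw [le_div_iff₀ hβ]; linarith
  have hsq : 3*β*(k+k')^2 ≤ 3*β*(2*k+1)^2 := by
    have hdiff : 0 ≤ ((2*k+1) - (k+k')) * ((2*k+1) + (k+k')) :=
      mul_nonneg (by linarith) (by linarith)
    nlinarith [hβ.le]
  have hcr : (k+k')*(6 + β*(36 + 6*kstar + 18*k + 6*(k+k')))
      ≤ (2*k+1)*(6 + β*(36 + 6*kstar + 18*k + 6*(2*k+1))) := by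
    have hb : (6 + β*(36 + 6*kstar + 18*k + 6*(k+k')))
        ≤ (6 + β*(36 + 6*kstar + 18*k + 6*(2*k+1))) := by
      have := mul_le_mul_of_nonneg_left
        (by linarith : (36 + 6*kstar + 18*k + 6*(k+k')) ≤ (36 + 6*kstar + 18*k + 6*(2*k+1)))
        hβ.le
      linarith
    have ha0 : 0 ≤ k + k' := by linarith
    have hb0 : 0 ≤ 6 + β*(36 + 6*kstar + 18*k + 6*(k+k')) := by
      have : 0 ≤ β*(36 + 6*kstar + 18*k + 6*(k+k')) := mul_nonneg hβ.le (by linarith)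
      linarith
    exact mul_le_mul (by linarith) hb hb0 (by linarith)
  have hβk : β*k ≤ k := by nlinarith
  have hβks : β*kstar ≤ kstar := by nlinarith
  have hβk2 : 0 ≤ β*k^2 := by positivity
  have hβkks : 0 ≤ β*k*kstar := by positivity
  nlinarith [mul_nonneg (mul_nonneg hβ.le (by linarith : (0:ℝ) ≤ k)) hks, sq_nonneg k,
    mul_nonneg hβ.le (sq_nonneg k), mul_le_mul_of_nonneg_left hβk (by linarith : (0:ℝ) ≤ 126)]
end Aux10
section Aux11

lemma texp_le (t : ℝ) : t * Real.exp (-t) ≤ 1 := by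
  have h := Real.add_one_le_exp t
  have hp := Real.exp_pos t
  rw [Real.exp_neg, ← div_eq_mul_inv, div_le_one hp]
  linarith

lemma lexp_le (β ℓ : ℝ) (hβ : 0 < β) : ℓ * Real.exp (-β*ℓ) ≤ 1/β := by
  have h := texp_le (β*ℓ)
  rw [le_div_iff₀ hβ]
  calc ℓ * Real.exp (-β*ℓ) * β = (β*ℓ) * Real.exp (-(β*ℓ)) := by rw [neg_mul]; ring
    _ ≤ 1 := h

lemma l2exp_le (β ℓ : ℝ) (hβ : 0 < β) (hℓ : 0 ≤ ℓ) :
    ℓ^2 * Real.exp (-β*ℓ) ≤ 4/β^2 := by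
  have h2 : ℓ * Real.exp (-(β/2)*ℓ) ≤ 2/β := by
    have h := lexp_le (β/2) ℓ (by linarith)
    rw [one_div_div] at h
    exact h
  have h0 : 0 ≤ ℓ * Real.exp (-(β/2)*ℓ) := by positivity
  have hsq : (ℓ * Real.exp (-(β/2)*ℓ))^2 ≤ (2/β)^2 := pow_le_pow_left₀ h0 h2 2
  have hexp : Real.exp (-β*ℓ) = Real.exp (-(β/2)*ℓ) * Real.exp (-(β/2)*ℓ) := by
    rw [← Real.exp_add]; ring_nf
  calc ℓ^2 * Real.exp (-β*ℓ) = (ℓ * Real.exp (-(β/2)*ℓ))^2 := by rw [hexp]; ring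
    _ ≤ (2/β)^2 := hsq
    _ = 4/β^2 := by rw [div_pow]; norm_num

lemma F_bdd (C β kstar a : ℝ) (hC : 0 < C) (hβ : 0 < β) (hks : 0 ≤ kstar) (ha : 0 ≤ a) :
    BddAbove (Set.range fun ℓ : {x : ℝ // 0 ≤ x} =>
      Real.exp (-β * (ℓ:ℝ)) * (C * ((a + (ℓ:ℝ) + kstar) * (1 + β * (a + (ℓ:ℝ))) + 1/β))) := by
  refine ⟨C * ((a+kstar)*(1+β*a) + 1/β + (β*(a+kstar))*(1/β) + (1+β*a)*(1/β)
    + β*(4/β^2)), ?_⟩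
  rintro y ⟨⟨ℓ, hℓ⟩, rfl⟩
  dsimp only
  have he0 : 0 < Real.exp (-β*ℓ) := Real.exp_pos _
  have he1 : Real.exp (-β*ℓ) ≤ 1 := by
    have h := Real.exp_le_exp.mpr (show -β*ℓ ≤ 0 by nlinarith)
    rwa [Real.exp_zero] at h
  have hl := lexp_le β ℓ hβ
  have hl2 := l2exp_le β ℓ hβ hℓ
  have hdecomp : Real.exp (-β*ℓ) * (C * ((a + ℓ + kstar) * (1 + β * (a + ℓ)) + 1/β))
      = C * ( ((a+kstar)*(1+β*a)) * Real.exp (-β*ℓ) + (1/β) * Real.exp (-β*ℓ)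
        + (β*(a+kstar)) * (ℓ * Real.exp (-β*ℓ)) + (1+β*a) * (ℓ * Real.exp (-β*ℓ))
        + β * (ℓ^2 * Real.exp (-β*ℓ)) ) := by ring
  rw [hdecomp]
  refine mul_le_mul_of_nonneg_left ?_ hC.le
  have c1 : 0 ≤ (a+kstar)*(1+β*a) := mul_nonneg (by linarith) (by nlinarith)
  have c2 : 0 ≤ β*(a+kstar) := mul_nonneg hβ.le (by linarith)
  have c3 : (0:ℝ) ≤ 1+β*a := by nlinarith
  have t1 : ((a+kstar)*(1+β*a)) * Real.exp (-β*ℓ) ≤ (a+kstar)*(1+β*a) :=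
    mul_le_of_le_one_right c1 he1
  have t2 : (1/β) * Real.exp (-β*ℓ) ≤ 1/β :=
    mul_le_of_le_one_right (by positivity) he1
  have t3 : (β*(a+kstar))*(ℓ*Real.exp (-β*ℓ)) ≤ (β*(a+kstar))*(1/β) :=
    mul_le_mul_of_nonneg_left hl c2
  have t4 : (1+β*a)*(ℓ*Real.exp (-β*ℓ)) ≤ (1+β*a)*(1/β) :=
    mul_le_mul_of_nonneg_left hl c3
  have t5 : β*(ℓ^2*Real.exp (-β*ℓ)) ≤ β*(4/β^2) :=
    mul_le_mul_of_nonneg_left hl2 hβ.le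
  linarith

lemma smoothS_ge {n : ℕ} (G : SimpleGraph (Fin n)) (kstar β C : ℝ)
    (hC : 0 < C) (hβ : 0 < β) (hks : 0 ≤ kstar) :
    C * (((kOf G kstar:ℝ)+kstar)*(1+β*(kOf G kstar:ℝ)) + 1/β) ≤ smoothS G kstar β C := by
  have hb := F_bdd C β kstar (kOf G kstar : ℝ) hC hβ hks (Nat.cast_nonneg _)
  have h := le_ciSup hb (⟨0, le_refl 0⟩ : {x : ℝ // 0 ≤ x})
  rw [smoothS]
  refine le_trans ?_ h
  dsimp only
  norm_num

lemma smoothS_smooth {n : ℕ} (G G' : SimpleGraph (Fin n)) (kstar β C : ℝ)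
    (hC : 0 < C) (hβ : 0 < β) (hks : 0 ≤ kstar)
    (hkk : (kOf G' kstar:ℝ) ≤ (kOf G kstar:ℝ) + 1) :
    smoothS G' kstar β C ≤ Real.exp β * smoothS G kstar β C := by
  rw [smoothS, smoothS]
  haveI : Nonempty {x : ℝ // 0 ≤ x} := ⟨⟨0, le_refl 0⟩⟩
  refine ciSup_le fun ℓ => ?_
  obtain ⟨l, hl⟩ := ℓ
  dsimp only
  have ha0 : (0:ℝ) ≤ (kOf G kstar:ℝ) := Nat.cast_nonneg _
  have ha0' : (0:ℝ) ≤ (kOf G' kstar:ℝ) := Nat.cast_nonneg _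
  have hmono : ((kOf G' kstar:ℝ) + l + kstar) * (1 + β*((kOf G' kstar:ℝ) + l)) + 1/β
      ≤ ((kOf G kstar:ℝ) + (l+1) + kstar) * (1 + β*((kOf G kstar:ℝ) + (l+1))) + 1/β := by
    have hA : (kOf G' kstar:ℝ) + l + kstar ≤ (kOf G kstar:ℝ) + (l+1) + kstar := by linarith
    have hB : 1 + β*((kOf G' kstar:ℝ) + l) ≤ 1 + β*((kOf G kstar:ℝ) + (l+1)) := by
      have := mul_le_mul_of_nonneg_left
        (by linarith : (kOf G' kstar:ℝ) + l ≤ (kOf G kstar:ℝ) + (l+1)) hβ.le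
      linarith
    have hB0 : 0 ≤ 1 + β*((kOf G' kstar:ℝ) + l) := by
      have : 0 ≤ β*((kOf G' kstar:ℝ)+l) := mul_nonneg hβ.le (by linarith)
      linarith
    have hA0 : 0 ≤ (kOf G' kstar:ℝ) + l + kstar := by linarith
    nlinarith [mul_le_mul hA hB hB0 (by linarith : 0 ≤ (kOf G kstar:ℝ) + (l+1) + kstar)]
  have hkey := le_ciSup (F_bdd C β kstar (kOf G kstar:ℝ) hC hβ hks ha0)
    (⟨l+1, by linarith⟩ : {x:ℝ//0≤x})
  dsimp only at hkey
  have hexp : Real.exp (-β*l) = Real.exp β * Real.exp (-β*(l+1)) := by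
    rw [← Real.exp_add]; ring_nf
  calc Real.exp (-β*l)
        * (C*(((kOf G' kstar:ℝ)+l+kstar)*(1+β*((kOf G' kstar:ℝ)+l))+1/β))
      ≤ Real.exp (-β*l)
        * (C*(((kOf G kstar:ℝ)+(l+1)+kstar)*(1+β*((kOf G kstar:ℝ)+(l+1)))+1/β)) := by
        exact mul_le_mul_of_nonneg_left (mul_le_mul_of_nonneg_left hmono hC.le)
          (Real.exp_pos _).le
    _ = Real.exp β * (Real.exp (-β*(l+1))
        * (C*(((kOf G kstar:ℝ)+(l+1)+kstar)*(1+β*((kOf G kstar:ℝ)+(l+1)))+1/β))) := by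
        rw [hexp]; ring
    _ ≤ Real.exp β * _ := mul_le_mul_of_nonneg_left hkey (Real.exp_pos β).le

end Aux11

/-- `S(G) = sup_{ℓ ≥ 0} e^{-βℓ} g(k_G + ℓ)` is a `β`-smooth upper
bound on the local sensitivity of `f`. -/
theorem smoothS_is_smooth_upper_bound :
    ∃ C : ℝ, 0 < C ∧
      ∀ n : ℕ, 2 ≤ n → ∀ kstar : ℝ, 0 ≤ kstar → ∀ β : ℝ, 0 < β → β ≤ 1 →
        (∀ G G' : SimpleGraph (Fin n), NodeAdjacent G G' →
          |fEst G kstar β - fEst G' kstar β| ≤ smoothS G kstar β C) ∧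
        (∀ G G' : SimpleGraph (Fin n), NodeAdjacent G G' →
          smoothS G' kstar β C ≤ Real.exp β * smoothS G kstar β C) := by
  refine ⟨300, by norm_num, ?_⟩
  intro n hn kstar hks β hβ hβ1
  constructor
  · intro G G' hadj
    obtain ⟨i, hi⟩ := hadj
    have hmb := main_bound hi hn kstar β hks hβ
    have hk1 : (1:ℝ) ≤ (kOf G kstar:ℝ) := by
      have h := (kOf_spec (by omega : 0 < n) G kstar).1
      exact_mod_cast h
    have hk1' : (1:ℝ) ≤ (kOf G' kstar:ℝ) := by
      have h := (kOf_spec (by omega : 0 < n) G' kstar).1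
      exact_mod_cast h
    have hkk : (kOf G' kstar:ℝ) ≤ (kOf G kstar:ℝ) + 1 := by
      exact_mod_cast kOf_le_succ hi hn kstar hks
    have har := arith_bound (kOf G kstar:ℝ) (kOf G' kstar:ℝ) kstar β hk1 hk1' hkk hks hβ hβ1
    have hS := smoothS_ge G kstar β 300 (by norm_num) hβ hks
    calc |fEst G kstar β - fEst G' kstar β| ≤ _ := hmb
      _ ≤ 300*(((kOf G kstar:ℝ)+kstar)*(1+β*(kOf G kstar:ℝ)) + 1/β) := har
      _ ≤ smoothS G kstar β 300 := hS
  · intro G G' hadj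
    obtain ⟨i, hi⟩ := hadj
    have hkk : (kOf G' kstar:ℝ) ≤ (kOf G kstar:ℝ) + 1 := by
      exact_mod_cast kOf_le_succ hi hn kstar hks
    exact smoothS_smooth G G' kstar β 300 (by norm_num) hβ hks hkk

end
end

section
/- For all real numbers β > 0, a ≥ 0, b ≥ 0, and ℓ ≥ 0, one has e^{−β·ℓ}·( (a + ℓ + b)·(1 + β·(a + ℓ)) + 1/β ) ≤ 3a + 2b + β·a·(a + b) + 3/β. -/
open MeasureTheory Finset
open scoped Classical

noncomputable section

lemma exp_quad_aux (x : ℝ) (hx : 0 ≤ x) : 1 + x + x^2 ≤ 3 * Real.exp x := by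
  have h := Real.add_one_le_exp (x/3)
  have h3 : (x / 3 + 1)^3 ≤ (Real.exp (x / 3))^3 := by
    apply pow_le_pow_left₀ (by positivity) h
  rw [← Real.exp_nat_mul] at h3
  have hc : ((3:ℕ):ℝ) * (x / 3) = x := by push_cast; ring
  rw [hc] at h3
  nlinarith [pow_nonneg hx 3]

lemma exp_lin_aux (x : ℝ) : x ≤ Real.exp x := by
  linarith [Real.add_one_le_exp x]

/-- the real-analytic inequality used to bound the smooth sensitivity. -/
theorem smooth_sensitivity_inequality (β a b ℓ : ℝ)
    (hβ : 0 < β) (ha : 0 ≤ a) (hb : 0 ≤ b) (hℓ : 0 ≤ ℓ) :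
    Real.exp (-β * ℓ) * ((a + ℓ + b) * (1 + β * (a + ℓ)) + 1 / β) ≤
      3 * a + 2 * b + β * a * (a + b) + 3 / β := by
  have hx0 : 0 ≤ β * ℓ := by positivity
  set E := Real.exp (-β * ℓ) with hE
  have hE0 : 0 < E := Real.exp_pos _
  have hE1 : E ≤ 1 := Real.exp_le_one_iff.mpr (by linarith)
  have h2e : Real.exp (β * ℓ) * E = 1 := by
    rw [hE, ← Real.exp_add]; simp
  have hEx : E * (β * ℓ) ≤ 1 := by
    have h1 := exp_lin_aux (β * ℓ)
    nlinarith
  have hEq : E * (1 + β * ℓ + (β * ℓ)^2) ≤ 3 := by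
    have h1 := exp_quad_aux (β * ℓ)  hx0
    nlinarith [mul_pos (Real.exp_pos (β * ℓ)) hE0]
  have key : E * (β * ((a + ℓ + b) * (1 + β * (a + ℓ))) + 1) ≤
      β * (3 * a + 2 * b + β * a * (a + b)) + 3 := by
    nlinarith [mul_nonneg (mul_nonneg (sub_nonneg.mpr hE1) hβ.le) (add_nonneg ha hb),
      mul_nonneg (mul_nonneg (mul_nonneg (sub_nonneg.mpr hE1) (mul_nonneg hβ.le hβ.le)) ha) (add_nonneg ha hb),
      mul_nonneg (mul_nonneg (sub_nonneg.mpr hEx) hβ.le) (add_nonneg (add_nonneg ha ha) hb),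
      hEq]
  have h2 : E * ((a + ℓ + b) * (1 + β * (a + ℓ)) + 1 / β) =
      (E * (β * ((a + ℓ + b) * (1 + β * (a + ℓ))) + 1)) / β := by
    rw [eq_div_iff hβ.ne']; field_simp
  have h3 : 3 * a + 2 * b + β * a * (a + b) + 3 / β =
      (β * (3 * a + 2 * b + β * a * (a + b)) + 3) / β := by
    rw [eq_div_iff hβ.ne']; field_simp
  rw [h2, h3]
  gcongr

end
end

section
/- Let ν be the probability measure on ℝ with density z ↦ 2/(√3·π·(1 + z²/3)²) with respect to Lebesgue measure (the Student's t-distribution with 3 degrees of freedom, which has mean 0 and second moment 3). There exists a universal constant C₀ > 0 such that for every n ≥ 2, every natural number k ≥ 1, and every ε ∈ (0,1], the following holds. Set k* = k and β = min(ε, 1/√k), let G be an n-node graph in 𝒢_{n,k} with edge set E, let f and k_G be defined from k* and β as in the concentrated-degree estimator, and let S(G) = sup over real ℓ ≥ 0 of e^{−β·ℓ}·C·((k_G + ℓ + k*)·(1 + β·(k_G + ℓ)) + 1/β), where C > 0 is the constant from the local-sensitivity bound. Then the noisy estimate Â(z) = ( f(G) + (S(G)/ε)·z ) / C(n,2) satisfies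 ∫ ( p_G − Â(z) )² dν(z) ≤ C₀·(1 + C²)·( k²/(ε²·n⁴) + 1/(ε⁴·n⁴) ). -/
open MeasureTheory Finset
open scoped Classical

noncomputable section

-- ==================== auxiliary lemmas ====================

namespace AccuracyAux

open Real Filter

/-! ### The second moment of the Student t(3) distribution -/

def gdens (z : ℝ) : ℝ := 2 / (Real.sqrt 3 * Real.pi * (1 + z ^ 2 / 3) ^ 2)
def hfun (z : ℝ) : ℝ := 18 * z ^ 2 / (Real.sqrt 3 * Real.pi * (3 + z ^ 2) ^ 2)
def Ffun (z : ℝ) : ℝ := (3 / Real.pi) * Real.arctan (z / Real.sqrt 3)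
  - (9 / (Real.sqrt 3 * Real.pi)) * (z / (3 + z ^ 2))

lemma sqrt3_pos : (0:ℝ) < Real.sqrt 3 := Real.sqrt_pos.2 (by norm_num)
lemma sq_sqrt3 : Real.sqrt 3 ^ 2 = 3 := Real.sq_sqrt (by norm_num)
lemma denom_pos (z : ℝ) : (0:ℝ) < 3 + z ^ 2 := by positivity

lemma gdens_nonneg (z : ℝ) : 0 ≤ gdens z := by
  unfold gdens; have := sqrt3_pos; have := Real.pi_pos; positivity

lemma gdens_cont : Continuous gdens := by
  unfold gdens
  apply Continuous.div continuous_const (by continuity)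
  intro z
  have := sqrt3_pos; have := Real.pi_pos
  positivity

lemma gdens_mul (z : ℝ) : gdens z * z ^ 2 = hfun z := by
  unfold gdens hfun
  have h1 : (0:ℝ) < 1 + z ^ 2 / 3 := by positivity
  have h2 := sqrt3_pos; have h3 := Real.pi_pos
  rw [div_mul_eq_mul_div, div_eq_div_iff (by positivity) (by positivity)]
  ring

lemma hasDeriv_F (z : ℝ) : HasDerivAt Ffun (hfun z) z := by
  have hA : HasDerivAt (fun z : ℝ => Real.arctan (z / Real.sqrt 3))
      ((1 + (z / Real.sqrt 3) ^ 2)⁻¹ * (1 / Real.sqrt 3)) z := by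
    have := (Real.hasDerivAt_arctan (z / Real.sqrt 3)).comp z
      ((hasDerivAt_id z).div_const (Real.sqrt 3))
    simpa [one_div, Function.comp_def] using this
  have hB : HasDerivAt (fun z : ℝ => z / (3 + z ^ 2))
      ((1 * (3 + z ^ 2) - z * (2 * z)) / (3 + z ^ 2) ^ 2) z := by
    have h1 : HasDerivAt (fun z : ℝ => z) 1 z := hasDerivAt_id z
    have h2 : HasDerivAt (fun z : ℝ => 3 + z ^ 2) (2 * z) z := by
      simpa using ((hasDerivAt_pow 2 z).const_add 3)
    exact h1.div h2 (denom_pos z).ne'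
  have := ((hA.const_mul (3 / Real.pi)).sub
    (hB.const_mul (9 / (Real.sqrt 3 * Real.pi))))
  refine this.congr_deriv ?_
  have hpi := Real.pi_pos
  have h3 := sqrt3_pos
  have h4 := denom_pos z
  have h5 : (1 + (z / Real.sqrt 3) ^ 2) = (3 + z^2) / 3 := by
    rw [div_pow, sq_sqrt3]; ring
  rw [hfun, h5]
  field_simp
  ring

lemma hfun_nonneg (z : ℝ) : 0 ≤ hfun z := by
  unfold hfun
  have := sqrt3_pos; have := Real.pi_pos; positivity

lemma hfun_cont : Continuous hfun := by
  unfold hfun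
  apply Continuous.div (by continuity) (by continuity)
  intro z
  have := sqrt3_pos; have := Real.pi_pos; have := denom_pos z
  positivity

lemma hfun_integrable : Integrable hfun := by
  have hc : (0:ℝ) < Real.sqrt 3 * Real.pi := by
    have := sqrt3_pos; have := Real.pi_pos; positivity
  refine Integrable.mono' (integrable_inv_one_add_sq.const_mul (18 / (Real.sqrt 3 * Real.pi)))
    hfun_cont.aestronglyMeasurable (Filter.Eventually.of_forall fun z => ?_)
  rw [Real.norm_eq_abs, abs_of_nonneg (hfun_nonneg z)]
  unfold hfun
  have h1 : (0:ℝ) < 1 + z ^ 2 := by positivity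
  have h4 := denom_pos z
  rw [inv_eq_one_div, mul_one_div, div_le_div_iff₀ (by positivity) (by positivity)]
  have key : z ^ 2 * (1 + z ^ 2) ≤ (3 + z ^ 2) ^ 2 := by nlinarith [sq_nonneg z]
  have h6 : 18 / (Real.sqrt 3 * Real.pi) * (Real.sqrt 3 * Real.pi * (3 + z ^ 2) ^ 2)
      = 18 * (3 + z ^ 2) ^ 2 := by field_simp
  rw [h6]; nlinarith

lemma tendsto_second_top : Tendsto (fun z : ℝ => z / (3 + z ^ 2)) atTop (nhds 0) := by
  have h : Tendsto (fun z : ℝ => (3 + z ^ 2) / z) atTop atTop := by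
    apply tendsto_atTop_mono' atTop (f₁ := fun z : ℝ => z)
    · filter_upwards [eventually_ge_atTop (1:ℝ)] with z hz
      rw [le_div_iff₀ (by linarith)]
      nlinarith
    · exact tendsto_id
  have := h.inv_tendsto_atTop
  refine this.congr' ?_
  filter_upwards [eventually_gt_atTop (0:ℝ)] with z hz
  simp [Pi.inv_apply, inv_div]

lemma tendsto_second_bot : Tendsto (fun z : ℝ => z / (3 + z ^ 2)) atBot (nhds 0) := by
  have hcomp : Tendsto (fun z : ℝ => (-z) / (3 + (-z) ^ 2)) atTop (nhds 0) := by
    have := tendsto_second_top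
    have h2 : Tendsto (fun z : ℝ => -(z / (3 + z ^ 2))) atTop (nhds (-0)) := this.neg
    simp only [neg_zero] at h2
    refine h2.congr fun z => by ring
  have := hcomp.comp (tendsto_neg_atBot_atTop (G := ℝ))
  refine this.congr fun z => by simp

lemma tendsto_F_top : Tendsto Ffun atTop (nhds (3/2)) := by
  have h1 : Tendsto (fun z : ℝ => z / Real.sqrt 3) atTop atTop :=
    tendsto_id.atTop_div_const sqrt3_pos
  have h2 : Tendsto (fun z : ℝ => Real.arctan (z / Real.sqrt 3)) atTop (nhds (π/2)) :=
    (tendsto_nhds_of_tendsto_nhdsWithin Real.tendsto_arctan_atTop).comp h1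
  have h3 := (h2.const_mul (3 / Real.pi)).sub
    ((tendsto_second_top).const_mul (9 / (Real.sqrt 3 * Real.pi)))
  have hpi := Real.pi_ne_zero
  unfold Ffun
  convert h3 using 2
  field_simp
  ring

lemma tendsto_F_bot : Tendsto Ffun atBot (nhds (-(3/2))) := by
  have h1 : Tendsto (fun z : ℝ => z / Real.sqrt 3) atBot atBot :=
    tendsto_id.atBot_div_const sqrt3_pos
  have h2 : Tendsto (fun z : ℝ => Real.arctan (z / Real.sqrt 3)) atBot (nhds (-(π/2))) :=
    (tendsto_nhds_of_tendsto_nhdsWithin Real.tendsto_arctan_atBot).comp h1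
  have h3 := (h2.const_mul (3 / Real.pi)).sub
    ((tendsto_second_bot).const_mul (9 / (Real.sqrt 3 * Real.pi)))
  have hpi := Real.pi_ne_zero
  unfold Ffun
  convert h3 using 2
  field_simp
  ring

lemma integral_hfun : ∫ z : ℝ, hfun z = 3 := by
  have hIic : ∫ z in Set.Iic (0:ℝ), hfun z = Ffun 0 - (-(3/2)) :=
    MeasureTheory.integral_Iic_of_hasDerivAt_of_tendsto
      (hasDeriv_F 0).continuousAt.continuousWithinAt
      (fun x _ => hasDeriv_F x) hfun_integrable.integrableOn tendsto_F_bot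
  have hIoi : ∫ z in Set.Ioi (0:ℝ), hfun z = 3/2 - Ffun 0 :=
    MeasureTheory.integral_Ioi_of_hasDerivAt_of_tendsto
      (hasDeriv_F 0).continuousAt.continuousWithinAt
      (fun x _ => hasDeriv_F x) hfun_integrable.integrableOn tendsto_F_top
  have := intervalIntegral.integral_Iic_add_Ioi (b := (0:ℝ)) (f := hfun)
    hfun_integrable.integrableOn hfun_integrable.integrableOn
  rw [← this, hIic, hIoi]
  ring

lemma integral_sq_studentT3 : ∫ z : ℝ, z ^ 2 ∂studentT3 = 3 := by
  have hmeas : Measurable fun z : ℝ => (gdens z).toNNReal :=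
    measurable_real_toNNReal.comp gdens_cont.measurable
  have hst : studentT3 = MeasureTheory.volume.withDensity
      (fun z => ((gdens z).toNNReal : ENNReal)) := by
    rw [studentT3]
    rfl
  rw [hst, integral_withDensity_eq_integral_smul hmeas]
  have : ∀ z : ℝ, (gdens z).toNNReal • (z ^ 2) = hfun z := by
    intro z
    rw [NNReal.smul_def, Real.coe_toNNReal _ (gdens_nonneg z), smul_eq_mul, gdens_mul]
  simp_rw [this]
  exact integral_hfun

/-! ### exponential decay estimates -/

lemma exp_mul_le (β ℓ : ℝ) (hβ : 0 < β) (hℓ : 0 ≤ ℓ) :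
    ℓ * Real.exp (-(β * ℓ)) ≤ 1 / β := by
  rw [Real.exp_neg, inv_eq_one_div, mul_one_div,
    div_le_div_iff₀ (Real.exp_pos _) hβ]
  nlinarith [Real.add_one_le_exp (β * ℓ), Real.exp_pos (β * ℓ)]

lemma exp_sq_mul_le (β ℓ : ℝ) (hβ : 0 < β) (hℓ : 0 ≤ ℓ) :
    ℓ ^ 2 * Real.exp (-(β * ℓ)) ≤ 4 / β ^ 2 := by
  rw [Real.exp_neg, inv_eq_one_div, mul_one_div,
    div_le_div_iff₀ (Real.exp_pos _) (by positivity)]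
  have hexp : Real.exp (β * ℓ) = Real.exp (β * ℓ / 2) * Real.exp (β * ℓ / 2) := by
    rw [← Real.exp_add]; ring_nf
  have h1 : β * ℓ / 2 ≤ Real.exp (β * ℓ / 2) := by
    nlinarith [Real.add_one_le_exp (β * ℓ / 2)]
  have h0 : (0:ℝ) ≤ β * ℓ / 2 := by positivity
  nlinarith [mul_le_mul h1 h1 h0 (Real.exp_pos (β * ℓ / 2)).le, hexp]

lemma term_le (k β ε C ℓ : ℝ) (hk : 1 ≤ k) (hβ : 0 < β) (hβ1 : β ≤ 1)
    (hβinv : 1 / β ≤ 1 / ε + k) (hε : 0 < ε) (hC : 0 < C) (hℓ : 0 ≤ ℓ) :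
    Real.exp (-β * ℓ) * (C * ((1 + ℓ + k) * (1 + β * (1 + ℓ)) + 1 / β))
      ≤ 13 * C * (k + 1 / ε) := by
  have hE0 : 0 < Real.exp (-(β * ℓ)) := Real.exp_pos _
  have hE1 : Real.exp (-(β * ℓ)) ≤ 1 := Real.exp_le_one_iff.2 (by nlinarith)
  have t2 := exp_mul_le β ℓ hβ hℓ
  have t4 := exp_sq_mul_le β ℓ hβ hℓ
  have hβinv0 : 0 < 1 / β := by positivity
  have hεinv0 : 0 < 1 / ε := by positivity
  have key : Real.exp (-(β * ℓ)) * ((1 + ℓ + k) * (1 + β * (1 + ℓ)) + 1 / β)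
      ≤ 13 * (k + 1 / ε) := by
    have expand : Real.exp (-(β * ℓ)) * ((1 + ℓ + k) * (1 + β * (1 + ℓ)) + 1 / β)
        = Real.exp (-(β * ℓ)) * ((1 + k) * (1 + β))
          + (1 + k) * β * (ℓ * Real.exp (-(β * ℓ)))
          + (1 + β) * (ℓ * Real.exp (-(β * ℓ)))
          + β * (ℓ ^ 2 * Real.exp (-(β * ℓ)))
          + Real.exp (-(β * ℓ)) * (1 / β) := by ring
    have b1 : Real.exp (-(β * ℓ)) * ((1 + k) * (1 + β)) ≤ 2 * (1 + k) := by
      calc Real.exp (-(β * ℓ)) * ((1 + k) * (1 + β)) ≤ 1 * ((1 + k) * (1 + β)) := by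
            apply mul_le_mul_of_nonneg_right hE1 (by nlinarith)
        _ ≤ 2 * (1 + k) := by nlinarith
    have b2 : (1 + k) * β * (ℓ * Real.exp (-(β * ℓ))) ≤ 1 + k := by
      have h := mul_le_mul_of_nonneg_left t2 (by positivity : (0:ℝ) ≤ (1 + k) * β)
      calc (1 + k) * β * (ℓ * Real.exp (-(β * ℓ))) ≤ (1 + k) * β * (1 / β) := h
        _ = 1 + k := by field_simp
    have b3 : (1 + β) * (ℓ * Real.exp (-(β * ℓ))) ≤ 2 * (1 / β) := by
      have h := mul_le_mul_of_nonneg_left t2 (by linarith : (0:ℝ) ≤ 1 + β)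
      nlinarith [mul_nonneg hℓ hE0.le]
    have b4 : β * (ℓ ^ 2 * Real.exp (-(β * ℓ))) ≤ 4 * (1 / β) := by
      have h := mul_le_mul_of_nonneg_left t4 hβ.le
      calc β * (ℓ ^ 2 * Real.exp (-(β * ℓ))) ≤ β * (4 / β ^ 2) := h
        _ = 4 * (1 / β) := by field_simp
    have b5 : Real.exp (-(β * ℓ)) * (1 / β) ≤ 1 / β := by nlinarith
    rw [expand]
    linarith
  calc Real.exp (-β * ℓ) * (C * ((1 + ℓ + k) * (1 + β * (1 + ℓ)) + 1 / β))
      = C * (Real.exp (-(β * ℓ)) * ((1 + ℓ + k) * (1 + β * (1 + ℓ)) + 1 / β)) := by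
        rw [neg_mul]; ring
    _ ≤ C * (13 * (k + 1 / ε)) := by
        exact mul_le_mul_of_nonneg_left key hC.le
    _ = 13 * C * (k + 1 / ε) := by ring

end AccuracyAux

namespace AccuracyAux

lemma tDist_eq_zero {n : ℕ} {G : SimpleGraph (Fin n)} {k : ℝ}
    (hG : Concentrated G k) (v : Fin n) : tDist G k v = 0 := by
  unfold tDist
  have h1 : |(deg G v : ℝ) - avgDeg G| ≤ k := hG v
  have h2 : (0:ℝ) ≤ 3 * (kOf G k : ℝ) := by positivity
  have : |(deg G v : ℝ) - avgDeg G| - (k + 3 * (kOf G k : ℝ)) ≤ 0 := by linarith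
  exact max_eq_left this

lemma wt_eq_one {n : ℕ} {G : SimpleGraph (Fin n)} {k β : ℝ}
    (hG : Concentrated G k) (v : Fin n) : wt G k β v = 1 := by
  unfold wt
  rw [tDist_eq_zero hG v]
  norm_num

lemma kOf_eq_one {n : ℕ} {G : SimpleGraph (Fin n)} {k : ℝ}
    (hG : Concentrated G k) : kOf G k = 1 := by
  have hfar : ∀ m : ℕ, 0 < m → farCount G k m = 0 := by
    intro m hm
    unfold farCount
    convert Set.ncard_empty (Fin n)
    ext v
    simp only [Set.mem_setOf_eq, Set.mem_empty_iff_false, iff_false, not_lt]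
    have := hG v
    have : (1:ℝ) ≤ (m:ℝ) := by exact_mod_cast hm
    linarith [hG v]
  have h1 : 1 ∈ {m : ℕ | 0 < m ∧ farCount G k m ≤ m} :=
    ⟨one_pos, by rw [hfar 1 one_pos]; norm_num⟩
  unfold kOf
  have hmem := Nat.sInf_mem (s := {m : ℕ | 0 < m ∧ farCount G k m ≤ m}) ⟨1, h1⟩
  have hle := Nat.sInf_le h1
  have := hmem.1
  omega

lemma fEst_eq_edgeCount {n : ℕ} {G : SimpleGraph (Fin n)} {k β : ℝ}
    (hG : Concentrated G k) : fEst G k β = (edgeCount G : ℝ) := by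
  unfold fEst
  have hval : ∀ u v : Fin n, u ≠ v → valPair G k β u v = if G.Adj u v then 1 else 0 := by
    intro u v _
    unfold valPair
    rw [wt_eq_one hG, wt_eq_one hG]
    norm_num
  have hsum : ∀ u : Fin n, (∑ v : Fin n, if u ≠ v then valPair G k β u v else 0)
      = (G.degree u : ℝ) := by
    intro u
    have : ∀ v : Fin n, (if u ≠ v then valPair G k β u v else 0)
        = (if G.Adj u v then (1:ℝ) else 0) := by
      intro v
      by_cases h : u = v
      · simp [h, G.loopless]
      · rw [if_pos h, hval u v h]
    simp_rw [this]
    rw [Finset.sum_boole]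
    congr 1
    simp [SimpleGraph.degree, SimpleGraph.neighborFinset_eq_filter]
  simp_rw [hsum]
  have : ∑ u : Fin n, (G.degree u : ℝ) = ((∑ u : Fin n, G.degree u : ℕ) : ℝ) := by
    push_cast; ring
  rw [this, SimpleGraph.sum_degrees_eq_twice_card_edges]
  have hec : edgeCount G = G.edgeFinset.card := by
    rw [edgeCount, SimpleGraph.edgeFinset, Set.ncard_eq_toFinset_card']
  rw [hec]
  push_cast
  ring

lemma smoothS_bounds {n : ℕ} {G : SimpleGraph (Fin n)} {k β ε C : ℝ}
    (hkOf : kOf G k = 1) (hk : 1 ≤ k) (hβ : 0 < β) (hβ1 : β ≤ 1)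
    (hβinv : 1 / β ≤ 1 / ε + k) (hε : 0 < ε) (hC : 0 < C) :
    0 ≤ smoothS G k β C ∧ smoothS G k β C ≤ 13 * C * (k + 1 / ε) := by
  haveI : Nonempty {x : ℝ // 0 ≤ x} := ⟨⟨0, le_rfl⟩⟩
  constructor
  · apply Real.iSup_nonneg
    intro ℓ
    refine mul_nonneg (Real.exp_pos _).le (mul_nonneg hC.le ?_)
    have hℓ : (0:ℝ) ≤ (ℓ : ℝ) := ℓ.2
    rw [hkOf]
    have hβinv0 : (0:ℝ) < 1 / β := by positivity
    push_cast
    nlinarith [mul_nonneg (by linarith : (0:ℝ) ≤ 1 + (ℓ:ℝ) + k)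
      (by nlinarith : (0:ℝ) ≤ 1 + β * (1 + (ℓ:ℝ)))]
  · apply ciSup_le
    intro ℓ
    have hℓ : (0:ℝ) ≤ (ℓ : ℝ) := ℓ.2
    rw [hkOf]
    push_cast
    exact term_le k β ε C ℓ hk hβ hβ1 hβinv hε hC hℓ

end AccuracyAux

set_option maxHeartbeats 1000000 in
/-- accuracy of the noisy estimate on `𝒢_{n,k}`: the mean squared
error over the Student-t noise is `O((1+C²)·(k²/(ε²n⁴) + 1/(ε⁴n⁴)))`. -/
theorem accuracy_concentrated :
    ∃ C₀ : ℝ, 0 < C₀ ∧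
      ∀ n : ℕ, 2 ≤ n → ∀ k : ℕ, 1 ≤ k → ∀ ε : ℝ, 0 < ε → ε ≤ 1 → ∀ C : ℝ, 0 < C →
        ∀ G : SimpleGraph (Fin n), Concentrated G (k : ℝ) →
          (∫ z, (edgeDensity G -
              (fEst G (k : ℝ) (min ε (1 / Real.sqrt k)) +
                smoothS G (k : ℝ) (min ε (1 / Real.sqrt k)) C / ε * z) /
                (n.choose 2 : ℝ)) ^ 2 ∂studentT3) ≤
            C₀ * (1 + C ^ 2) *
              ((k : ℝ) ^ 2 / (ε ^ 2 * (n : ℝ) ^ 4) + 1 / (ε ^ 4 * (n : ℝ) ^ 4)) := by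
  refine ⟨20000, by norm_num, ?_⟩
  intro n hn k hk ε hε hε1 C hC G hG
  have hk1 : (1:ℝ) ≤ (k:ℝ) := by exact_mod_cast hk
  have hn2 : (2:ℝ) ≤ (n:ℝ) := by exact_mod_cast hn
  set β := min ε (1 / Real.sqrt k) with hβdef
  have hsk : (0:ℝ) < Real.sqrt k := Real.sqrt_pos.2 (by linarith)
  have hβ : 0 < β := lt_min hε (by positivity)
  have hβ1 : β ≤ 1 := le_trans (min_le_left _ _) hε1
  have hβinv : 1 / β ≤ 1 / ε + k := by
    rcases min_cases ε (1 / Real.sqrt k) with ⟨h, _⟩ | ⟨h, _⟩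
    · rw [hβdef, h]
      have : (0:ℝ) ≤ (k:ℝ) := by linarith
      linarith
    · rw [hβdef, h, one_div_one_div]
      have hsq : Real.sqrt k ≤ (k:ℝ) := by
        have h1 : Real.sqrt k ≤ Real.sqrt ((k:ℝ)^2) := Real.sqrt_le_sqrt (by nlinarith)
        rwa [Real.sqrt_sq (by linarith)] at h1
      have : (0:ℝ) ≤ 1 / ε := by positivity
      linarith
  have hkOf : kOf G (k:ℝ) = 1 := AccuracyAux.kOf_eq_one hG
  have hfe : fEst G (k:ℝ) β = (edgeCount G : ℝ) := AccuracyAux.fEst_eq_edgeCount hG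
  obtain ⟨hS0, hSB⟩ := AccuracyAux.smoothS_bounds hkOf hk1 hβ hβ1 hβinv hε hC
  set S := smoothS G (k:ℝ) β C with hSdef
  set q := ((n.choose 2 : ℕ) : ℝ) with hqdef
  have hq : (n:ℝ)^2 / 4 ≤ q := by
    rw [hqdef, Nat.cast_choose_two]
    nlinarith
  have hqpos : (0:ℝ) < q := lt_of_lt_of_le (by positivity) hq
  have hintegrand : ∀ z : ℝ,
      (edgeDensity G - (fEst G (k:ℝ) β + S / ε * z) / q) ^ 2
        = (S / (ε * q)) ^ 2 * z ^ 2 := by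
    intro z
    rw [hfe, edgeDensity, ← hqdef]
    have h1 : (edgeCount G : ℝ) / q - ((edgeCount G : ℝ) + S / ε * z) / q
        = -(S / (ε * q) * z) := by
      field_simp
      ring
    rw [h1]
    ring
  simp_rw [hintegrand]
  rw [MeasureTheory.integral_const_mul, AccuracyAux.integral_sq_studentT3]
  -- final arithmetic
  have hS2 : S ^ 2 ≤ 338 * C ^ 2 * ((k:ℝ) ^ 2 + 1 / ε ^ 2) := by
    have hB2 : S ^ 2 ≤ (13 * C * ((k:ℝ) + 1 / ε)) ^ 2 :=
      pow_le_pow_left₀ hS0 hSB 2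
    have h1 : (0:ℝ) < 1 / ε := by positivity
    have h2 : ((k:ℝ) + 1/ε)^2 ≤ 2 * ((k:ℝ)^2 + (1/ε)^2) := by
      nlinarith [sq_nonneg ((k:ℝ) - 1/ε)]
    have h3 : ((1:ℝ)/ε)^2 = 1/ε^2 := by rw [div_pow]; norm_num
    have hexp : (13 * C * ((k:ℝ) + 1 / ε)) ^ 2 = 169 * C^2 * ((k:ℝ) + 1/ε)^2 := by ring
    have h4 : 169 * C^2 * ((k:ℝ) + 1/ε)^2 ≤ 169 * C^2 * (2 * ((k:ℝ)^2 + (1/ε)^2)) :=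
      mul_le_mul_of_nonneg_left h2 (by positivity)
    rw [h3] at h4
    rw [hexp] at hB2
    nlinarith [hB2, h4]
  have hq4 : (n:ℝ)^4 / 16 ≤ q ^ 2 := by nlinarith
  have hA : (S / (ε * q)) ^ 2 * 3 ≤ 3 * ((338 * C ^ 2 * ((k:ℝ)^2 + 1/ε^2)) / (ε^2 * ((n:ℝ)^4 / 16))) := by
    rw [div_pow, mul_pow]
    have := div_le_div₀ (by positivity : (0:ℝ) ≤ 338 * C ^ 2 * ((k:ℝ)^2 + 1/ε^2)) hS2
      (by positivity : (0:ℝ) < ε^2 * ((n:ℝ)^4/16))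
      (by nlinarith [sq_nonneg ε] : ε^2 * ((n:ℝ)^4/16) ≤ ε^2 * q^2)
    linarith
  refine le_trans hA ?_
  have hid : (k:ℝ)^2 / (ε^2 * (n:ℝ)^4) + 1 / (ε^4 * (n:ℝ)^4)
      = ((k:ℝ)^2 + 1/ε^2) / (ε^2 * (n:ℝ)^4) := by
    field_simp
  rw [hid]
  have hXpos : (0:ℝ) ≤ ((k:ℝ)^2 + 1/ε^2) / (ε^2 * (n:ℝ)^4) := by positivity
  have hEq : 3 * ((338 * C ^ 2 * ((k:ℝ)^2 + 1/ε^2)) / (ε^2 * ((n:ℝ)^4 / 16)))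
      = 16224 * C^2 * (((k:ℝ)^2 + 1/ε^2) / (ε^2 * (n:ℝ)^4)) := by
    field_simp
    ring
  rw [hEq]
  nlinarith [mul_nonneg (sq_nonneg C) hXpos, hXpos]


end
end

section
/- For every n ≥ 4 and every positive integer i with i + 1 ≤ n/2, let ℓ = ⌊n/(i+1)⌋, let G₀ be the n-node graph consisting of i disjoint cliques whose sizes are each ⌊n/i⌋ or ⌈n/i⌉ (summing to n), and let G₁ be the n-node graph consisting of i+1 disjoint cliques whose sizes are each ⌊n/(i+1)⌋ or ⌈n/(i+1)⌉ (summing to n). Then G₀ has at least ℓ(ℓ+1)/2 more edges than G₁, and consequently p_{G₀} − p_{G₁} ≥ ℓ²/n². -/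
open MeasureTheory Finset
open scoped Classical

noncomputable section

lemma aux_edge_double {n k : ℕ} (π : Fin n → Fin k) :
    2 * edgeCount (cliqueUnion π) =
      ∑ j : Fin k, (univ.filter fun v => π v = j).card *
        ((univ.filter fun v => π v = j).card - 1) := by
  have h1 : edgeCount (cliqueUnion π) = (cliqueUnion π).edgeFinset.card := by
    simp [edgeCount, SimpleGraph.edgeFinset, Set.ncard_eq_toFinset_card']
  rw [h1, ← SimpleGraph.sum_degrees_eq_twice_card_edges]
  have hdeg : ∀ v : Fin n, (cliqueUnion π).degree v =
      (univ.filter fun u => π u = π v).card - 1 := by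
    intro v
    have : (cliqueUnion π).neighborFinset v = (univ.filter fun u => π u = π v).erase v := by
      ext u
      rw [SimpleGraph.mem_neighborFinset]
      simp [cliqueUnion, eq_comm, and_comm]
    rw [SimpleGraph.degree, this, card_erase_of_mem (by simp)]
  calc ∑ v, (cliqueUnion π).degree v
      = ∑ v : Fin n, ((univ.filter fun u => π u = π v).card - 1) := by
        exact Finset.sum_congr rfl fun v _ => hdeg v
    _ = ∑ j : Fin k, ∑ v ∈ univ.filter fun v => π v = j,
          ((univ.filter fun u => π u = π v).card - 1) := by
        rw [Finset.sum_fiberwise]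
    _ = ∑ j : Fin k, (univ.filter fun v => π v = j).card *
        ((univ.filter fun v => π v = j).card - 1) := by
        refine Finset.sum_congr rfl fun j _ => ?_
        rw [Finset.sum_congr rfl fun v hv => ?_, Finset.sum_const, smul_eq_mul]
        have := (Finset.mem_filter.mp hv).2
        simp [this]

lemma aux_sum_sizes {n k : ℕ} (π : Fin n → Fin k) :
    ∑ j : Fin k, (univ.filter fun v => π v = j).card = n := by
  rw [← Finset.card_eq_sum_card_fiberwise (f := π) (s := univ) (t := univ) (by simp)]
  simp

lemma aux_double_formula {n k q : ℕ} (π : Fin n → Fin k)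
    (hs : ∀ j, (univ.filter fun v => π v = j).card = q ∨
      (univ.filter fun v => π v = j).card = q + 1) :
    2 * edgeCount (cliqueUnion π) = k * (q * (q - 1)) + 2 * q * (n - k * q) := by
  have hterm : ∀ j : Fin k, (univ.filter fun v => π v = j).card *
      ((univ.filter fun v => π v = j).card - 1) =
      q * (q - 1) + 2 * q * ((univ.filter fun v => π v = j).card - q) := by
    intro j
    rcases hs j with h | h <;> rw [h]
    · simp
    · have e2 : q + 1 - q = 1 := by omega
      rw [e2]
      rcases q with _ | m
      · simp
      · simp only [Nat.add_sub_cancel, Nat.succ_sub_one]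
        ring
  have hq : ∀ j : Fin k, q ≤ (univ.filter fun v => π v = j).card := by
    intro j; rcases hs j with h | h <;> omega
  rw [aux_edge_double, Finset.sum_congr rfl fun j _ => hterm j, Finset.sum_add_distrib,
    Finset.sum_const, ← Finset.mul_sum]
  have : ∑ j : Fin k, ((univ.filter fun v => π v = j).card - q) = n - k * q := by
    have := Finset.sum_tsub_distrib (s := (univ : Finset (Fin k)))
      (f := fun j => (univ.filter fun v => π v = j).card) (g := fun _ => q)
      (fun j _ => hq j)
    rw [this, aux_sum_sizes]
    simp [mul_comm]
  rw [this]
  simp [mul_comm]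

lemma aux_key (i ℓ d r0 : ℤ) (hd : 0 ≤ d) (hi : 0 ≤ i) (hr0 : 0 ≤ r0) :
    ℓ * ((i * (ℓ + d) + r0) + (r0 + i * d - ℓ) - i - 1) + ℓ * (ℓ + 1) ≤
      (ℓ + d) * ((i * (ℓ + d) + r0) + r0 - i) := by
  have h1 : 0 ≤ d * (d - 1) := by
    rcases hd.lt_or_eq with h | h
    · nlinarith
    · simp [← h]
  nlinarith [mul_nonneg hi h1, mul_nonneg hr0 hd]

/-- comparing unions of `i` and `i+1` near-equal cliques: the former
has at least `ℓ(ℓ+1)/2` more edges, where `ℓ = ⌊n/(i+1)⌋`, hence the edge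
densities differ by at least `ℓ²/n²`. -/
theorem clique_union_edge_gap (n : ℕ) (hn : 4 ≤ n) (i : ℕ) (hi : 1 ≤ i)
    (hin : i + 1 ≤ n / 2)
    (π₀ : Fin n → Fin i) (π₁ : Fin n → Fin (i + 1))
    (h₀ : ∀ j : Fin i, {v : Fin n | π₀ v = j}.ncard = n / i ∨
      {v : Fin n | π₀ v = j}.ncard = (n + i - 1) / i)
    (h₁ : ∀ j : Fin (i + 1), {v : Fin n | π₁ v = j}.ncard = n / (i + 1) ∨
      {v : Fin n | π₁ v = j}.ncard = (n + i) / (i + 1)) :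
    edgeCount (cliqueUnion π₁) + (n / (i + 1)) * (n / (i + 1) + 1) / 2 ≤
      edgeCount (cliqueUnion π₀) ∧
    ((n / (i + 1) : ℕ) : ℝ) ^ 2 / (n : ℝ) ^ 2 ≤
      edgeDensity (cliqueUnion π₀) - edgeDensity (cliqueUnion π₁) := by
  simp only [Set.ncard_eq_toFinset_card', Set.toFinset_setOf] at h₀ h₁
  set q := n / i with hqdef
  set L := n / (i + 1) with hLdef
  set r0 := n % i with hr0def
  set r1 := n % (i + 1) with hr1def
  have hn0 : 0 < n := by omega
  have hi0 : 0 < i := hi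
  -- block sizes are q or q+1, L or L+1
  have hs0 : ∀ j : Fin i, (univ.filter fun v => π₀ v = j).card = q ∨
      (univ.filter fun v => π₀ v = j).card = q + 1 := by
    intro j
    have hlo : q ≤ (n + i - 1) / i := Nat.div_le_div_right (by omega)
    have hhi : (n + i - 1) / i ≤ q + 1 := by
      have : (n + i - 1) / i ≤ (n + i) / i := Nat.div_le_div_right (by omega)
      rwa [Nat.add_div_right n hi0] at this
    rcases h₀ j with h | h <;> omega
  have hs1 : ∀ j : Fin (i + 1), (univ.filter fun v => π₁ v = j).card = L ∨
      (univ.filter fun v => π₁ v = j).card = L + 1 := by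
    intro j
    have hlo : L ≤ (n + i) / (i + 1) := Nat.div_le_div_right (by omega)
    have hhi : (n + i) / (i + 1) ≤ L + 1 := by
      have : (n + i) / (i + 1) ≤ (n + (i + 1)) / (i + 1) := Nat.div_le_div_right (by omega)
      rwa [Nat.add_div_right n (by omega)] at this
    rcases h₁ j with h | h <;> omega
  have hE0 : 2 * edgeCount (cliqueUnion π₀) = i * (q * (q - 1)) + 2 * q * (n - i * q) :=
    aux_double_formula π₀ hs0
  have hE1 : 2 * edgeCount (cliqueUnion π₁) =
      (i + 1) * (L * (L - 1)) + 2 * L * (n - (i + 1) * L) :=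
    aux_double_formula π₁ hs1
  have hdm0 : i * q + r0 = n := Nat.div_add_mod n i
  have hdm1 : (i + 1) * L + r1 = n := Nat.div_add_mod n (i + 1)
  have hsub0 : n - i * q = r0 := by omega
  have hsub1 : n - (i + 1) * L = r1 := by omega
  rw [hsub0] at hE0
  rw [hsub1] at hE1
  -- L ≥ 2, q ≥ L
  have hL2 : 2 ≤ L := by
    rw [hLdef, Nat.le_div_iff_mul_le (by omega)]
    omega
  have hqL : L ≤ q := Nat.div_le_div_left (by omega) hi0
  -- the key inequality
  have hkey : (i + 1) * (L * (L - 1)) + 2 * L * r1 + L * (L + 1) ≤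
      i * (q * (q - 1)) + 2 * q * r0 := by
    obtain ⟨d, hd⟩ : ∃ d, q = L + d := ⟨q - L, by omega⟩
    have h1L : 1 ≤ L := by omega
    have h1q : 1 ≤ q := by omega
    zify [h1L, h1q]
    have hr1Z : (r1 : ℤ) = r0 + i * d - L := by
      have e0 : (i : ℤ) * q + r0 = n := by exact_mod_cast hdm0
      have e1 : ((i : ℤ) + 1) * L + r1 = n := by exact_mod_cast hdm1
      have hdZ : (q : ℤ) = L + d := by exact_mod_cast hd
      linear_combination e1 - e0 + (i : ℤ) * hdZ
    have key := aux_key i L d r0 (by positivity) (by positivity) (by positivity)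
    have e1 : ((i : ℤ) + 1) * ((L : ℤ) * (L - 1)) + 2 * L * r1 + L * (L + 1) =
        (L : ℤ) * ((i * (L + d) + r0) + (r0 + i * d - L) - i - 1) + L * (L + 1) := by
      rw [hr1Z]; ring
    have e2 : (i : ℤ) * ((q : ℤ) * (q - 1)) + 2 * q * r0 =
        ((L : ℤ) + d) * ((i * (L + d) + r0) + r0 - i) := by
      have hdZ : (q : ℤ) = L + d := by exact_mod_cast hd
      rw [hdZ]; ring
    rw [e1, e2]
    exact key
  have h2 : 2 * edgeCount (cliqueUnion π₁) + L * (L + 1) ≤ 2 * edgeCount (cliqueUnion π₀) := by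
    rw [hE0, hE1]; omega
  constructor
  · obtain ⟨m, hm⟩ := Nat.even_mul_succ_self L
    generalize hM : L * (L + 1) = M at h2 hm ⊢
    omega
  · -- real part
    have hchoose : (n.choose 2 : ℝ) = (n : ℝ) * ((n : ℝ) - 1) / 2 := Nat.cast_choose_two (K := ℝ) n
    have hC : (0 : ℝ) < (n : ℝ) * ((n : ℝ) - 1) / 2 := by
      have : (4 : ℝ) ≤ (n : ℝ) := by exact_mod_cast hn
      nlinarith
    have hnR : (4 : ℝ) ≤ (n : ℝ) := by exact_mod_cast hn
    have hEreal : (edgeCount (cliqueUnion π₁) : ℝ) * 2 + (L : ℝ) * ((L : ℝ) + 1) ≤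
        (edgeCount (cliqueUnion π₀) : ℝ) * 2 := by
      have := (Nat.cast_le (α := ℝ)).mpr h2
      push_cast at this
      linarith
    have hL0 : (0 : ℝ) ≤ (L : ℝ) := by positivity
    rw [edgeDensity, edgeDensity, hchoose, div_sub_div_same, div_le_div_iff₀ (by positivity) hC]
    nlinarith [mul_le_mul_of_nonneg_right hEreal (sq_nonneg ((n : ℝ))),
      mul_nonneg (mul_nonneg hL0 (by linarith : (0:ℝ) ≤ (n:ℝ))) (by linarith : (0:ℝ) ≤ (n:ℝ)),
      mul_nonneg (mul_nonneg hL0 hL0) (by linarith : (0:ℝ) ≤ (n:ℝ))]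

end
end
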